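/- arXiv:2202.09800 — 6 statements merged into one kernel-verified Lean document; each statement's English description precedes it below -/
import Mathlib

section
/- Let Ω ⊆ ℂ be a nonempty open set, let X : Ω → ℝ⁴ be a C² map, and let Ψ, f₁, f₂ : Ω → ℂ be C¹ functions such that X_z = Ψ·(f₁ + f₂, −i·(f₁ − f₂), 1 − f₁f₂, 1 + f₁f₂) componentwise on Ω. Then at every point of Ω: (1) Ψ_z̄ = conj(Ψ_z̄), i.e. Ψ_z̄ is real; (2) (Ψ·f₁·f₂)_z̄ = conj((Ψ·f₁·f₂)_z̄), i.e. (Ψ·f₁·f₂)_z̄ is real; (3) (Ψ·f₁)_z̄ = conj((Ψ·f₂)_z̄). -/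
open Complex

/-- Directional derivative of `f` in the direction `1` (the `u`-direction). -/
noncomputable def pdu (f : ℂ → ℂ) (z : ℂ) : ℂ := fderiv ℝ f z 1

/-- Directional derivative of `f` in the direction `i` (the `v`-direction). -/
noncomputable def pdv (f : ℂ → ℂ) (z : ℂ) : ℂ := fderiv ℝ f z Complex.I

/-- Wirtinger derivative `f_z = (1/2)(∂_u f - i ∂_v f)`. -/
noncomputable def wz (f : ℂ → ℂ) (z : ℂ) : ℂ :=
  (1 / 2 : ℂ) * (pdu f z - Complex.I * pdv f z)

/-- Wirtinger derivative `f_z̄ = (1/2)(∂_u f + i ∂_v f)`. -/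
noncomputable def wzb (f : ℂ → ℂ) (z : ℂ) : ℂ :=
  (1 / 2 : ℂ) * (pdu f z + Complex.I * pdv f z)

/-- Mixed Wirtinger derivative `f_{zz̄} = (f_z)_z̄`. -/
noncomputable def wzzb (f : ℂ → ℂ) (z : ℂ) : ℂ := wzb (fun w => wz f w) z

/-- `P_z` for a real-valued function, regarded as ℂ-valued. -/
noncomputable def rz (P : ℂ → ℝ) (z : ℂ) : ℂ := wz (fun w => (P w : ℂ)) z

/-- `P_z̄` for a real-valued function, regarded as ℂ-valued. -/
noncomputable def rzb (P : ℂ → ℝ) (z : ℂ) : ℂ := wzb (fun w => (P w : ℂ)) z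

/-- `P_{zz̄}` for a real-valued function, regarded as ℂ-valued. -/
noncomputable def rzzb (P : ℂ → ℝ) (z : ℂ) : ℂ := wzzb (fun w => (P w : ℂ)) z

/-- Weierstrass data of the first kind on `Ω`. -/
structure IsWD1 (Ω : Set ℂ) (g : ℂ → ℂ) (P Q : ℂ → ℝ) : Prop where
  holo : ∀ z ∈ Ω, DifferentiableAt ℂ g z
  gne : ∀ z ∈ Ω, g z ≠ 0
  cP : ContDiffOn ℝ 2 P Ω
  cQ : ContDiffOn ℝ 2 Q Ω
  pde : ∀ z ∈ Ω, rzzb P z = ((‖g z‖ : ℂ)) ^ 2 * rzzb Q z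
  nz : ∀ z ∈ Ω, rz P z - ((‖g z‖ : ℂ)) ^ 2 * rz Q z ≠ 0

/-- Weierstrass data of the second kind on `Ω`. -/
structure IsWD2 (Ω : Set ℂ) (h : ℂ → ℂ) (M N : ℂ → ℝ) : Prop where
  holo : ∀ z ∈ Ω, DifferentiableAt ℂ h z
  hne : ∀ z ∈ Ω, h z ≠ 0
  cM : ContDiffOn ℝ 2 M Ω
  cN : ContDiffOn ℝ 2 N Ω
  pde : ∀ z ∈ Ω, rzzb M z = (((h z).re : ℂ)) * rzzb N z
  nz : ∀ z ∈ Ω, rz M z - (((h z).re : ℂ)) * rz N z ≠ 0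

/-- Componentwise Wirtinger derivative `X_z` of an ℝ⁴-valued map. -/
noncomputable def vz (X : ℂ → Fin 4 → ℝ) (z : ℂ) : Fin 4 → ℂ :=
  fun i => rz (fun w => X w i) z

/-- Componentwise mixed Wirtinger derivative `X_{zz̄}` of an ℝ⁴-valued map. -/
noncomputable def vzzb (X : ℂ → Fin 4 → ℝ) (z : ℂ) : Fin 4 → ℂ :=
  fun i => rzzb (fun w => X w i) z

/-- The ℂ-bilinear Lorentz form on ℂ⁴. -/
def lorC (x y : Fin 4 → ℂ) : ℂ := x 0 * y 0 + x 1 * y 1 + x 2 * y 2 - x 3 * y 3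

/-- The Lorentz bilinear form on ℝ⁴. -/
def lorR (x y : Fin 4 → ℝ) : ℝ := x 0 * y 0 + x 1 * y 1 + x 2 * y 2 - x 3 * y 3

open Filter Topology
open Complex Filter Topology

lemma pdu_has {f : ℂ → ℂ} {f' : ℂ →L[ℝ] ℂ} {z : ℂ} (h : HasFDerivAt f f' z) :
    pdu f z = f' 1 := by rw [pdu, h.fderiv]

lemma pdv_has {f : ℂ → ℂ} {f' : ℂ →L[ℝ] ℂ} {z : ℂ} (h : HasFDerivAt f f' z) :
    pdv f z = f' Complex.I := by rw [pdv, h.fderiv]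

lemma wz_congr {f g : ℂ → ℂ} {z : ℂ} (h : f =ᶠ[𝓝 z] g) : wz f z = wz g z := by
  unfold wz pdu pdv; rw [h.fderiv_eq]

lemma wzb_congr {f g : ℂ → ℂ} {z : ℂ} (h : f =ᶠ[𝓝 z] g) : wzb f z = wzb g z := by
  unfold wzb pdu pdv; rw [h.fderiv_eq]

lemma wz_conj {f : ℂ → ℂ} {z : ℂ} (hf : DifferentiableAt ℝ f z) :
    wz (fun w => (starRingEnd ℂ) (f w)) z = (starRingEnd ℂ) (wzb f z) := by
  have L := Complex.conjCLE.toContinuousLinearMap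
  have h : HasFDerivAt (fun w => (starRingEnd ℂ) (f w))
      (Complex.conjCLE.toContinuousLinearMap.comp (fderiv ℝ f z)) z :=
    Complex.conjCLE.toContinuousLinearMap.hasFDerivAt.comp z hf.hasFDerivAt
  rw [wz, wzb, pdu_has h, pdv_has h]
  simp only [ContinuousLinearMap.comp_apply, ContinuousLinearEquiv.coe_coe,
    Complex.conjCLE_apply, map_mul, map_add, map_sub, Complex.conj_I, map_div₀,
    map_one, map_ofNat]
  show _ = 1 / 2 * ((starRingEnd ℂ) (pdu f z) + -Complex.I * (starRingEnd ℂ) (pdv f z))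
  rw [pdu, pdv]
  ring

lemma wzb_linear {g h : ℂ → ℂ} {z a b : ℂ} (hg : DifferentiableAt ℝ g z)
    (hh : DifferentiableAt ℝ h z) :
    wzb (fun w => a * g w + b * h w) z = a * wzb g z + b * wzb h z := by
  have H : HasFDerivAt (fun w => a * g w + b * h w)
      (a • fderiv ℝ g z + b • fderiv ℝ h z) z :=
    (hg.hasFDerivAt.const_mul a).add (hh.hasFDerivAt.const_mul b)
  rw [wzb, wzb, wzb, pdu_has H, pdv_has H]
  simp only [ContinuousLinearMap.add_apply, ContinuousLinearMap.smul_apply, smul_eq_mul]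
  rw [pdu, pdv, pdu, pdv]
  ring

lemma hasFDerivAt_wz {f : ℂ → ℂ} {z : ℂ} (hf : ContDiffAt ℝ 2 f z) :
    HasFDerivAt (wz f)
      ((1/2 : ℂ) • (((ContinuousLinearMap.apply ℝ ℂ (1:ℂ)).comp (fderiv ℝ (fderiv ℝ f) z))
        - Complex.I • ((ContinuousLinearMap.apply ℝ ℂ Complex.I).comp
          (fderiv ℝ (fderiv ℝ f) z)))) z := by
  have hF : ContDiffAt ℝ 1 (fderiv ℝ f) z := hf.fderiv_right (by norm_num)
  have hFd : DifferentiableAt ℝ (fderiv ℝ f) z := hF.differentiableAt one_ne_zero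
  have ev : ∀ a : ℂ, HasFDerivAt (fun w => fderiv ℝ f w a)
      ((ContinuousLinearMap.apply ℝ ℂ a).comp (fderiv ℝ (fderiv ℝ f) z)) z :=
    fun a => (ContinuousLinearMap.apply ℝ ℂ a).hasFDerivAt.comp z hFd.hasFDerivAt
  exact ((ev 1).sub ((ev Complex.I).const_mul Complex.I)).const_mul (1/2 : ℂ)

lemma hasFDerivAt_wzb {f : ℂ → ℂ} {z : ℂ} (hf : ContDiffAt ℝ 2 f z) :
    HasFDerivAt (wzb f)
      ((1/2 : ℂ) • (((ContinuousLinearMap.apply ℝ ℂ (1:ℂ)).comp (fderiv ℝ (fderiv ℝ f) z))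
        + Complex.I • ((ContinuousLinearMap.apply ℝ ℂ Complex.I).comp
          (fderiv ℝ (fderiv ℝ f) z)))) z := by
  have hF : ContDiffAt ℝ 1 (fderiv ℝ f) z := hf.fderiv_right (by norm_num)
  have hFd : DifferentiableAt ℝ (fderiv ℝ f) z := hF.differentiableAt one_ne_zero
  have ev : ∀ a : ℂ, HasFDerivAt (fun w => fderiv ℝ f w a)
      ((ContinuousLinearMap.apply ℝ ℂ a).comp (fderiv ℝ (fderiv ℝ f) z)) z :=
    fun a => (ContinuousLinearMap.apply ℝ ℂ a).hasFDerivAt.comp z hFd.hasFDerivAt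
  exact ((ev 1).add ((ev Complex.I).const_mul Complex.I)).const_mul (1/2 : ℂ)

lemma wzb_wz_symm {f : ℂ → ℂ} {z : ℂ} (hf : ContDiffAt ℝ 2 f z) :
    wzb (wz f) z = wz (wzb f) z := by
  have hs := (hf.isSymmSndFDerivAt (by simp [minSmoothness_of_isRCLikeNormedField])) 1 Complex.I
  rw [wzb, wz, pdu_has (hasFDerivAt_wz hf), pdv_has (hasFDerivAt_wz hf),
    pdu_has (hasFDerivAt_wzb hf), pdv_has (hasFDerivAt_wzb hf)]
  simp only [ContinuousLinearMap.smul_apply, ContinuousLinearMap.sub_apply,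
    ContinuousLinearMap.add_apply, ContinuousLinearMap.comp_apply,
    ContinuousLinearMap.apply_apply, smul_eq_mul]
  linear_combination (-Complex.I / 2) * hs
lemma key {P : ℂ → ℝ} {Ω : Set ℂ} (hΩ : IsOpen Ω) {z : ℂ} (hz : z ∈ Ω)
    (hP : ContDiffOn ℝ 2 P Ω) :
    (starRingEnd ℂ) (wzb (rz P) z) = wzb (rz P) z := by
  set g : ℂ → ℂ := fun w => ((P w : ℂ)) with hg
  have hgC : ContDiffOn ℝ 2 g Ω := Complex.ofRealCLM.contDiff.comp_contDiffOn hP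
  have hgz : ContDiffAt ℝ 2 g z := hgC.contDiffAt (hΩ.mem_nhds hz)
  have hrz : rz P = wz g := rfl
  rw [hrz]
  have hd : DifferentiableAt ℝ (wz g) z := (hasFDerivAt_wz hgz).differentiableAt
  have h1 : wz (fun w => (starRingEnd ℂ) (wz g w)) z = (starRingEnd ℂ) (wzb (wz g) z) :=
    wz_conj hd
  have hEq : (fun w => (starRingEnd ℂ) (wz g w)) =ᶠ[𝓝 z] wzb g := by
    filter_upwards [hΩ.mem_nhds hz] with w hw
    have hgw : DifferentiableAt ℝ g w :=
      (hgC.contDiffAt (hΩ.mem_nhds hw)).differentiableAt two_ne_zero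
    have h2 := wz_conj (f := g) (z := w) hgw
    have hcg : (fun u => (starRingEnd ℂ) (g u)) = g := by
      funext u; simp [hg, Complex.conj_ofReal]
    rw [hcg] at h2
    rw [h2]
    simp
  calc (starRingEnd ℂ) (wzb (wz g) z)
      = wz (fun w => (starRingEnd ℂ) (wz g w)) z := h1.symm
    _ = wz (wzb g) z := wz_congr hEq
    _ = wzb (wz g) z := (wzb_wz_symm hgz).symm

/-- Integrability conditions of Liu's system. -/
theorem stmt_8 (Ω : Set ℂ) (hΩne : Ω.Nonempty) (hΩopen : IsOpen Ω)
    (X : ℂ → Fin 4 → ℝ) (hX : ∀ i, ContDiffOn ℝ 2 (fun w => X w i) Ω)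
    (Ψ f₁ f₂ : ℂ → ℂ)
    (hΨ : ContDiffOn ℝ 1 Ψ Ω) (hf₁ : ContDiffOn ℝ 1 f₁ Ω) (hf₂ : ContDiffOn ℝ 1 f₂ Ω)
    (hrep : ∀ z ∈ Ω, ∀ i, vz X z i
      = Ψ z * ![f₁ z + f₂ z, -Complex.I * (f₁ z - f₂ z),
          1 - f₁ z * f₂ z, 1 + f₁ z * f₂ z] i) :
    ∀ z ∈ Ω,
      wzb Ψ z = (starRingEnd ℂ) (wzb Ψ z) ∧
      wzb (fun w => Ψ w * f₁ w * f₂ w) z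
        = (starRingEnd ℂ) (wzb (fun w => Ψ w * f₁ w * f₂ w) z) ∧
      wzb (fun w => Ψ w * f₁ w) z = (starRingEnd ℂ) (wzb (fun w => Ψ w * f₂ w) z) := by
  intro z hz
  set g : Fin 4 → ℂ → ℂ := fun i w => ((X w i : ℂ)) with hgdef
  have hgC : ∀ i, ContDiffAt ℝ 2 (g i) z := fun i =>
    (Complex.ofRealCLM.contDiff.comp_contDiffOn (hX i)).contDiffAt (hΩopen.mem_nhds hz)
  have hφd : ∀ i : Fin 4, DifferentiableAt ℝ (wz (g i)) z := fun i =>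
    (hasFDerivAt_wz (hgC i)).differentiableAt
  have hreal : ∀ i : Fin 4, (starRingEnd ℂ) (wzb (wz (g i)) z) = wzb (wz (g i)) z :=
    fun i => key hΩopen hz (hX i)
  have H : ∀ w ∈ Ω,
      wz (g 0) w = Ψ w * (f₁ w + f₂ w) ∧
      wz (g 1) w = Ψ w * (-Complex.I * (f₁ w - f₂ w)) ∧
      wz (g 2) w = Ψ w * (1 - f₁ w * f₂ w) ∧
      wz (g 3) w = Ψ w * (1 + f₁ w * f₂ w) := by
    intro w hw
    have h0 := hrep w hw 0
    have h1 := hrep w hw 1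
    have h2 := hrep w hw 2
    have h3 := hrep w hw 3
    simp only [Matrix.cons_val_zero, Matrix.cons_val_one, Matrix.head_cons,
      Matrix.cons_val_two, Matrix.tail_cons, Matrix.cons_val_three] at h0 h1 h2 h3
    exact ⟨h0, h1, h2, h3⟩
  -- part 1
  have e1 : Ψ =ᶠ[𝓝 z] fun w => (1/2 : ℂ) * wz (g 2) w + (1/2 : ℂ) * wz (g 3) w := by
    filter_upwards [hΩopen.mem_nhds hz] with w hw
    obtain ⟨h0, h1, h2, h3⟩ := H w hw
    rw [h2, h3]; ring
  have w1 : wzb Ψ z = (1/2 : ℂ) * wzb (wz (g 2)) z + (1/2 : ℂ) * wzb (wz (g 3)) z := by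
    rw [wzb_congr e1, wzb_linear (hφd 2) (hφd 3)]
  -- part 2
  have e2 : (fun w => Ψ w * f₁ w * f₂ w) =ᶠ[𝓝 z]
      fun w => (-(1/2) : ℂ) * wz (g 2) w + (1/2 : ℂ) * wz (g 3) w := by
    filter_upwards [hΩopen.mem_nhds hz] with w hw
    obtain ⟨h0, h1, h2, h3⟩ := H w hw
    rw [h2, h3]; ring
  have w2 : wzb (fun w => Ψ w * f₁ w * f₂ w) z
      = (-(1/2) : ℂ) * wzb (wz (g 2)) z + (1/2 : ℂ) * wzb (wz (g 3)) z := by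
    rw [wzb_congr e2, wzb_linear (hφd 2) (hφd 3)]
  -- part 3
  have e3 : (fun w => Ψ w * f₁ w) =ᶠ[𝓝 z]
      fun w => (1/2 : ℂ) * wz (g 0) w + (Complex.I/2) * wz (g 1) w := by
    filter_upwards [hΩopen.mem_nhds hz] with w hw
    obtain ⟨h0, h1, h2, h3⟩ := H w hw
    rw [h0, h1]
    linear_combination (Ψ w * (f₁ w - f₂ w) / 2) * Complex.I_sq
  have e4 : (fun w => Ψ w * f₂ w) =ᶠ[𝓝 z]
      fun w => (1/2 : ℂ) * wz (g 0) w + (-(Complex.I)/2) * wz (g 1) w := by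
    filter_upwards [hΩopen.mem_nhds hz] with w hw
    obtain ⟨h0, h1, h2, h3⟩ := H w hw
    rw [h0, h1]
    linear_combination (-(Ψ w * (f₁ w - f₂ w)) / 2) * Complex.I_sq
  have w3 : wzb (fun w => Ψ w * f₁ w) z
      = (1/2 : ℂ) * wzb (wz (g 0)) z + (Complex.I/2) * wzb (wz (g 1)) z := by
    rw [wzb_congr e3, wzb_linear (hφd 0) (hφd 1)]
  have w4 : wzb (fun w => Ψ w * f₂ w) z
      = (1/2 : ℂ) * wzb (wz (g 0)) z + (-(Complex.I)/2) * wzb (wz (g 1)) z := by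
    rw [wzb_congr e4, wzb_linear (hφd 0) (hφd 1)]
  refine ⟨?_, ?_, ?_⟩
  · rw [w1, map_add, map_mul, map_mul, hreal 2, hreal 3]
    simp only [map_div₀, map_one, map_ofNat]
  · rw [w2, map_add, map_mul, map_mul, hreal 2, hreal 3]
    simp only [map_div₀, map_one, map_ofNat, map_neg]
  · rw [w3, w4, map_add, map_mul, map_mul, hreal 0, hreal 1]
    simp only [map_div₀, map_one, map_ofNat, Complex.conj_I, map_neg, neg_neg]
end

section
/- Let Ω ⊆ ℂ be a nonempty open preconnected set, let h : Ω → ℂ be a function, let M, N : Ω → ℝ be C¹ functions, and let λ ∈ ℝ. Suppose X₀, X_λ : Ω → ℝ⁴ are C¹ maps satisfying, at every point of Ω, (X₀)_z = M_z·(1, −i, −h, h) + N_z·(0, i·h, (1 + h²)/2, (1 − h²)/2) and (X_λ)_z = M_z·(1, −i, −(h + iλ), h + iλ) + N_z·(0, i·(h + iλ), (1 + (h + iλ)²)/2, (1 − (h + iλ)²)/2). Let L_λ : ℝ⁴ → ℝ⁴ be the linear map with matrix rows (1, 0, 0, 0), (0, 1, −λ, −λ), (0, λ, 1 − λ²/2,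 −λ²/2), (0, −λ, λ²/2, 1 + λ²/2). Then there exists a constant vector c ∈ ℝ⁴ such that X_λ(z) = L_λ(X₀(z)) + c for all z ∈ Ω. -/
open Complex

lemma rz_fderiv (P : ℂ → ℝ) (z : ℂ) (hP : DifferentiableAt ℝ P z) :
    rz P z = (1 / 2 : ℂ) * ((fderiv ℝ P z 1 : ℂ) - Complex.I * (fderiv ℝ P z Complex.I : ℂ)) := by
  have hco : fderiv ℝ (fun w => ((P w : ℝ) : ℂ)) z
      = Complex.ofRealCLM.comp (fderiv ℝ P z) :=
    (Complex.ofRealCLM.hasFDerivAt.comp z hP.hasFDerivAt).fderiv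
  simp [rz, wz, pdu, pdv, hco]

lemma real_complex_zero {x y : ℝ} (h : (x : ℂ) - Complex.I * (y : ℂ) = 0) : x = 0 ∧ y = 0 := by
  have h1 := congrArg Complex.re h
  have h2 := congrArg Complex.im h
  simp at h1 h2
  exact ⟨h1, h2⟩

lemma const_of_deriv_zero {f : ℂ → ℝ} {Ω : Set ℂ} (hΩopen : IsOpen Ω)
    (hΩconn : IsPreconnected Ω) (hf : ∀ z ∈ Ω, HasFDerivAt f (0 : ℂ →L[ℝ] ℝ) z) :
    ∀ x ∈ Ω, ∀ y ∈ Ω, f x = f y := by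
  have hloc : IsLocallyConstant (fun p : Ω => f p.1) := by
    rw [IsLocallyConstant.iff_exists_open]
    rintro ⟨x, hx⟩
    obtain ⟨ε, hε, hball⟩ := Metric.isOpen_iff.1 hΩopen x hx
    have hUopen : IsOpen (((↑) : Ω → ℂ) ⁻¹' Metric.ball x ε) :=
      IsOpen.preimage continuous_subtype_val Metric.isOpen_ball
    refine ⟨((↑) : Ω → ℂ) ⁻¹' Metric.ball x ε, hUopen, ?_, ?_⟩
    · simpa using Metric.mem_ball_self (x := x) hε
    rintro ⟨y, hy⟩ hyball
    have hdiff : DifferentiableOn ℝ f (Metric.ball x ε) := fun w hw =>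
      ((hf w (hball hw)).differentiableAt).differentiableWithinAt
    have hzero : ∀ w ∈ Metric.ball x ε, fderivWithin ℝ f (Metric.ball x ε) w = 0 := fun w hw =>
      ((hf w (hball hw)).hasFDerivWithinAt).fderivWithin
        (Metric.isOpen_ball.uniqueDiffWithinAt hw)
    exact (convex_ball x ε).is_const_of_fderivWithin_eq_zero hdiff hzero
      (by simpa using hyball) (Metric.mem_ball_self (x := x) hε)
  intro x hx y hy
  exact hloc.apply_eq_of_isPreconnected
    (Subtype.preconnectedSpace hΩconn).isPreconnected_univ (x := ⟨x, hx⟩) (y := ⟨y, hy⟩)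
    trivial trivial


/-- The parabolic deformation is induced by a parabolic rotation of 𝕃⁴. -/
theorem stmt_11 (Ω : Set ℂ) (hΩne : Ω.Nonempty) (hΩopen : IsOpen Ω)
    (hΩconn : IsPreconnected Ω)
    (h : ℂ → ℂ) (M N : ℂ → ℝ)
    (hM : ContDiffOn ℝ 1 M Ω) (hN : ContDiffOn ℝ 1 N Ω) (l : ℝ)
    (X₀ Xl : ℂ → Fin 4 → ℝ)
    (hX₀ : ∀ i, ContDiffOn ℝ 1 (fun w => X₀ w i) Ω)
    (hXl : ∀ i, ContDiffOn ℝ 1 (fun w => Xl w i) Ω)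
    (hrep₀ : ∀ z ∈ Ω, ∀ i, vz X₀ z i
      = rz M z * ![1, -Complex.I, -h z, h z] i
        + rz N z * ![0, Complex.I * h z, (1 + h z ^ 2) / 2, (1 - h z ^ 2) / 2] i)
    (hrepl : ∀ z ∈ Ω, ∀ i, vz Xl z i
      = rz M z * ![1, -Complex.I, -(h z + Complex.I * l), h z + Complex.I * l] i
        + rz N z * ![0, Complex.I * (h z + Complex.I * l),
            (1 + (h z + Complex.I * l) ^ 2) / 2,
            (1 - (h z + Complex.I * l) ^ 2) / 2] i)
    (L : Matrix (Fin 4) (Fin 4) ℝ)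
    (hL : L = !![1, 0, 0, 0;
                 0, 1, -l, -l;
                 0, l, 1 - l ^ 2 / 2, -(l ^ 2 / 2);
                 0, -l, l ^ 2 / 2, 1 + l ^ 2 / 2]) :
    ∃ c : Fin 4 → ℝ, ∀ z ∈ Ω, ∀ i, Xl z i = L.mulVec (X₀ z) i + c i := by
  
  obtain ⟨z₀, hz₀⟩ := hΩne
  refine ⟨fun i => Xl z₀ i - L.mulVec (X₀ z₀) i, fun z hz i => ?_⟩
  have main : ∀ p ∈ Ω, HasFDerivAt (fun w => Xl w i - L.mulVec (X₀ w) i)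
      (0 : ℂ →L[ℝ] ℝ) p := by
    intro p hp
    have dl : DifferentiableAt ℝ (fun w => Xl w i) p :=
      ((hXl i).contDiffAt (hΩopen.mem_nhds hp)).differentiableAt one_ne_zero
    have d0 : ∀ j, DifferentiableAt ℝ (fun w => X₀ w j) p := fun j =>
      ((hX₀ j).contDiffAt (hΩopen.mem_nhds hp)).differentiableAt one_ne_zero
    have key : vz Xl p i = (L i 0 : ℂ) * vz X₀ p 0 + (L i 1 : ℂ) * vz X₀ p 1
        + (L i 2 : ℂ) * vz X₀ p 2 + (L i 3 : ℂ) * vz X₀ p 3 := by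
      rw [hrepl p hp i, hrep₀ p hp 0, hrep₀ p hp 1, hrep₀ p hp 2, hrep₀ p hp 3, hL]
      fin_cases i <;>
        simp [Matrix.cons_val', Matrix.cons_val_zero, Matrix.cons_val_one, Matrix.head_cons,
          Matrix.empty_val', Matrix.cons_val_fin_one, Matrix.head_fin_const,
          Matrix.cons_val_succ, Matrix.of_apply, Matrix.vecHead, Matrix.vecTail,
          Function.comp] <;>
        push_cast
      · linear_combination ((l : ℂ) * rz N p) * Complex.I_sq
      · linear_combination ((l : ℂ) ^ 2 * rz N p / 2) * Complex.I_sq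
      · linear_combination (-((l : ℂ) ^ 2 * rz N p / 2)) * Complex.I_sq
    simp only [vz] at key
    rw [rz_fderiv _ _ dl, rz_fderiv _ _ (d0 0), rz_fderiv _ _ (d0 1),
      rz_fderiv _ _ (d0 2), rz_fderiv _ _ (d0 3)] at key
    have E := real_complex_zero
      (x := fderiv ℝ (fun w => Xl w i) p 1
        - (L i 0 * fderiv ℝ (fun w => X₀ w 0) p 1 + L i 1 * fderiv ℝ (fun w => X₀ w 1) p 1
          + L i 2 * fderiv ℝ (fun w => X₀ w 2) p 1 + L i 3 * fderiv ℝ (fun w => X₀ w 3) p 1))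
      (y := fderiv ℝ (fun w => Xl w i) p Complex.I
        - (L i 0 * fderiv ℝ (fun w => X₀ w 0) p Complex.I
          + L i 1 * fderiv ℝ (fun w => X₀ w 1) p Complex.I
          + L i 2 * fderiv ℝ (fun w => X₀ w 2) p Complex.I
          + L i 3 * fderiv ℝ (fun w => X₀ w 3) p Complex.I))
      (by push_cast; linear_combination 2 * key)
    have Hfun : (fun w => Xl w i - L.mulVec (X₀ w) i)
        = fun w => Xl w i - (L i 0 * X₀ w 0 + L i 1 * X₀ w 1 + L i 2 * X₀ w 2 + L i 3 * X₀ w 3) := by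
      funext w
      simp [Matrix.mulVec, dotProduct, Fin.sum_univ_four]
    have HD : HasFDerivAt
        (fun w => Xl w i - (L i 0 * X₀ w 0 + L i 1 * X₀ w 1 + L i 2 * X₀ w 2 + L i 3 * X₀ w 3))
        (fderiv ℝ (fun w => Xl w i) p -
          (L i 0 • fderiv ℝ (fun w => X₀ w 0) p + L i 1 • fderiv ℝ (fun w => X₀ w 1) p +
           L i 2 • fderiv ℝ (fun w => X₀ w 2) p + L i 3 • fderiv ℝ (fun w => X₀ w 3) p)) p :=
      dl.hasFDerivAt.sub (((((d0 0).hasFDerivAt.const_mul _).add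
        ((d0 1).hasFDerivAt.const_mul _)).add
        ((d0 2).hasFDerivAt.const_mul _)).add ((d0 3).hasFDerivAt.const_mul _))
    have hzero : (fderiv ℝ (fun w => Xl w i) p -
          (L i 0 • fderiv ℝ (fun w => X₀ w 0) p + L i 1 • fderiv ℝ (fun w => X₀ w 1) p +
           L i 2 • fderiv ℝ (fun w => X₀ w 2) p + L i 3 • fderiv ℝ (fun w => X₀ w 3) p))
        = (0 : ℂ →L[ℝ] ℝ) := by
      ext w
      have hw : w = w.re • (1 : ℂ) + w.im • Complex.I := by
        simp [Complex.real_smul, Complex.re_add_im]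
      rw [hw, map_add, map_smul, map_smul]
      simp only [ContinuousLinearMap.sub_apply, ContinuousLinearMap.add_apply,
        ContinuousLinearMap.coe_smul', Pi.smul_apply, smul_eq_mul,
        ContinuousLinearMap.zero_apply]
      linear_combination w.re * E.1 + w.im * E.2
    rw [Hfun]
    exact hzero ▸ HD
  have hc := const_of_deriv_zero hΩopen hΩconn main z hz z₀ hz₀
  show Xl z i = L.mulVec (X₀ z) i + (Xl z₀ i - L.mulVec (X₀ z₀) i)
  linarith [hc]
end

section
/- Let Ω ⊆ ℂ be a nonempty open preconnected set, let g : Ω → ℂ be a function with g(z) ≠ 0 for all z ∈ Ω, let P, Q : Ω → ℝ be C¹ functions, and let τ ∈ ℝ. Suppose X₀, X_τ : Ω → ℝ⁴ are C¹ maps satisfying, at every point of Ω, (X₀)_z = P_z·(1/g, i/g, 1, 1) + Q_z·(g, −i·g, −1, 1) and (X_τ)_z = P_z·(1/(e^{iτ}g), i/(e^{iτ}g), 1, 1) + Q_z·(e^{iτ}g, −i·e^{iτ}g, −1, 1). Let L_τ : ℝ⁴ → ℝ⁴ be the linear map with matrix rows (cos τ, −sin τ, 0, 0), (sin τ, cos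 τ, 0, 0), (0, 0, 1, 0), (0, 0, 0, 1). Then there exists a constant vector c ∈ ℝ⁴ such that X_τ(z) = L_τ(X₀(z)) + c for all z ∈ Ω. -/
open Complex

section Aux

lemma aux_rz_eq_fderiv (f : ℂ → ℝ) (z : ℂ) (hf : DifferentiableAt ℝ f z) :
    rz f z = (1/2 : ℂ) * ((fderiv ℝ f z 1 : ℂ) - Complex.I * (fderiv ℝ f z Complex.I : ℂ)) := by
  have h : fderiv ℝ (fun w => ((f w : ℂ))) z
      = Complex.ofRealCLM.comp (fderiv ℝ f z) :=
    (Complex.ofRealCLM.hasFDerivAt.comp z hf.hasFDerivAt).fderiv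
  simp [rz, wz, pdu, pdv, h]

lemma aux_fderiv_eq_zero_of_rz (f : ℂ → ℝ) (z : ℂ) (hf : DifferentiableAt ℝ f z)
    (h : rz f z = 0) : fderiv ℝ f z = 0 := by
  rw [aux_rz_eq_fderiv f z hf] at h
  have h2 : ((fderiv ℝ f z 1 : ℝ) : ℂ) - Complex.I * (fderiv ℝ f z Complex.I : ℂ) = 0 := by
    field_simp at h
    rw [mul_zero] at h
    exact h
  have h1 : (fderiv ℝ f z 1 : ℝ) = 0 := by
    have := congrArg Complex.re h2; simpa using this
  have hI : (fderiv ℝ f z Complex.I : ℝ) = 0 := by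
    have him := congrArg Complex.im h2
    simp only [Complex.sub_im, Complex.ofReal_im, Complex.mul_im, Complex.I_re, Complex.I_im,
      Complex.ofReal_re, Complex.zero_im] at him
    linarith
  ext v
  have hv : v = v.re • (1 : ℂ) + v.im • Complex.I := by
    simp [Complex.real_smul]
  rw [hv, map_add, map_smul, map_smul, h1, hI]
  simp

lemma aux_rz_comb (f g h : ℂ → ℝ) (a b : ℝ) (z : ℂ)
    (hf : DifferentiableAt ℝ f z) (hg : DifferentiableAt ℝ g z) (hh : DifferentiableAt ℝ h z) :
    rz (fun w => f w - (a * g w + b * h w)) z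
      = rz f z - ((a:ℂ) * rz g z + (b:ℂ) * rz h z) := by
  have hf' : DifferentiableAt ℝ (fun w => ((f w : ℂ))) z :=
    Complex.ofRealCLM.differentiableAt.comp z hf
  have hg' : DifferentiableAt ℝ (fun w => ((g w : ℂ))) z :=
    Complex.ofRealCLM.differentiableAt.comp z hg
  have hh' : DifferentiableAt ℝ (fun w => ((h w : ℂ))) z :=
    Complex.ofRealCLM.differentiableAt.comp z hh
  have heq : (fun w => ((f w - (a * g w + b * h w) : ℝ) : ℂ))
      = fun w => (f w : ℂ) - ((a:ℂ) * (g w:ℂ) + (b:ℂ) * (h w:ℂ)) := by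
    funext w; push_cast; ring
  have hD : fderiv ℝ (fun w => ((f w - (a * g w + b * h w) : ℝ) : ℂ)) z
      = fderiv ℝ (fun w => ((f w:ℂ))) z
        - ((a:ℂ) • fderiv ℝ (fun w => ((g w:ℂ))) z + (b:ℂ) • fderiv ℝ (fun w => ((h w:ℂ))) z) := by
    rw [heq, fderiv_fun_sub hf' ((hg'.const_mul _).fun_add (hh'.const_mul _)),
      fderiv_fun_add (hg'.const_mul _) (hh'.const_mul _), fderiv_const_mul hg' _,
      fderiv_const_mul hh' _]
  simp only [rz, wz, pdu, pdv, hD, ContinuousLinearMap.sub_apply, ContinuousLinearMap.add_apply,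
    ContinuousLinearMap.smul_apply, smul_eq_mul]
  ring

lemma aux_alg0 (rP rQ g e c s : ℂ) (hg : g ≠ 0) (he : e ≠ 0)
    (hecs : e = c + s * Complex.I) (hcs : c^2 + s^2 = 1) :
    rP * (1/(e*g)) + rQ * (e*g)
      - ((c * (rP * (1/g) + rQ * g)) + (-s) * (rP * (Complex.I/g) + rQ * (-Complex.I * g)))
      = 0 := by
  have h1 : e * (c - s * Complex.I) = 1 := by
    rw [hecs]; linear_combination hcs - s^2 * Complex.I_sq
  have h2 : 1/(e*g) = (c - s*Complex.I) * (1/g) := by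
    rw [one_div, one_div, mul_inv, inv_eq_of_mul_eq_one_right h1]
  rw [h2, hecs]
  ring

lemma aux_alg1 (rP rQ g e c s : ℂ) (hg : g ≠ 0) (he : e ≠ 0)
    (hecs : e = c + s * Complex.I) (hcs : c^2 + s^2 = 1) :
    rP * (Complex.I/(e*g)) + rQ * (-Complex.I * (e*g))
      - ((s * (rP * (1/g) + rQ * g)) + c * (rP * (Complex.I/g) + rQ * (-Complex.I * g))) = 0 := by
  have h1 : e * (c - s * Complex.I) = 1 := by
    rw [hecs]; linear_combination hcs - s^2 * Complex.I_sq
  have h2 : 1/(e*g) = (c - s*Complex.I) * (1/g) := by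
    rw [one_div, one_div, mul_inv, inv_eq_of_mul_eq_one_right h1]
  have h3 : Complex.I/(e*g) = Complex.I * (1/(e*g)) := by ring
  rw [h3, h2, hecs]
  linear_combination (-s*rP/g - s*rQ*g) * Complex.I_sq

end Aux

/-- The elliptic deformation is induced by an elliptic rotation of 𝕃⁴. -/

theorem stmt_12 (Ω : Set ℂ) (hΩne : Ω.Nonempty) (hΩopen : IsOpen Ω)
    (hΩconn : IsPreconnected Ω)
    (g : ℂ → ℂ) (hgne : ∀ z ∈ Ω, g z ≠ 0) (P Q : ℂ → ℝ)
    (hP : ContDiffOn ℝ 1 P Ω) (hQ : ContDiffOn ℝ 1 Q Ω) (τ : ℝ)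
    (X₀ Xτ : ℂ → Fin 4 → ℝ)
    (hX₀ : ∀ i, ContDiffOn ℝ 1 (fun w => X₀ w i) Ω)
    (hXτ : ∀ i, ContDiffOn ℝ 1 (fun w => Xτ w i) Ω)
    (hrep₀ : ∀ z ∈ Ω, ∀ i, vz X₀ z i
      = rz P z * ![1 / g z, Complex.I / g z, 1, 1] i
        + rz Q z * ![g z, -Complex.I * g z, -1, 1] i)
    (hrepτ : ∀ z ∈ Ω, ∀ i, vz Xτ z i
      = rz P z * ![1 / (Complex.exp (Complex.I * τ) * g z),
          Complex.I / (Complex.exp (Complex.I * τ) * g z), 1, 1] i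
        + rz Q z * ![Complex.exp (Complex.I * τ) * g z,
            -Complex.I * (Complex.exp (Complex.I * τ) * g z), -1, 1] i)
    (L : Matrix (Fin 4) (Fin 4) ℝ)
    (hL : L = !![Real.cos τ, -Real.sin τ, 0, 0;
                 Real.sin τ, Real.cos τ, 0, 0;
                 0, 0, 1, 0;
                 0, 0, 0, 1]) :
    ∃ c : Fin 4 → ℝ, ∀ z ∈ Ω, ∀ i, Xτ z i = L.mulVec (X₀ z) i + c i := by
  classical
  obtain ⟨z₀, hz₀⟩ := hΩne
  have hdXτ : ∀ i, ∀ z ∈ Ω, DifferentiableAt ℝ (fun w => Xτ w i) z := fun i z hz =>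
    ((hXτ i).differentiableOn one_ne_zero).differentiableAt (hΩopen.mem_nhds hz)
  have hdX₀ : ∀ i, ∀ z ∈ Ω, DifferentiableAt ℝ (fun w => X₀ w i) z := fun i z hz =>
    ((hX₀ i).differentiableOn one_ne_zero).differentiableAt (hΩopen.mem_nhds hz)
  set e : ℂ := Complex.exp (Complex.I * τ) with he_def
  have he : e ≠ 0 := Complex.exp_ne_zero _
  have hecs : e = (Real.cos τ : ℂ) + (Real.sin τ : ℂ) * Complex.I := by
    rw [he_def, mul_comm, Complex.exp_mul_I, Complex.ofReal_cos, Complex.ofReal_sin]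
  have hcs : (Real.cos τ : ℂ)^2 + (Real.sin τ : ℂ)^2 = 1 := by
    exact_mod_cast congrArg (fun x : ℝ => (x : ℂ)) (Real.cos_sq_add_sin_sq τ)
  have key : ∀ z ∈ Ω, ∀ i, fderiv ℝ (fun w => Xτ w i - L.mulVec (X₀ w) i) z = 0 := by
    intro z hz i
    have hgz := hgne z hz
    have t0 := hrepτ z hz 0; have t1 := hrepτ z hz 1
    have t2 := hrepτ z hz 2; have t3 := hrepτ z hz 3
    have s0 := hrep₀ z hz 0; have s1 := hrep₀ z hz 1
    have s2 := hrep₀ z hz 2; have s3 := hrep₀ z hz 3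
    simp only [vz, Matrix.cons_val_zero, Matrix.cons_val_one, Matrix.head_cons,
      Matrix.cons_val_two, Matrix.tail_cons, Matrix.cons_val_three] at t0 t1 t2 t3 s0 s1 s2 s3
    fin_cases i
    · show fderiv ℝ (fun w => Xτ w 0 - L.mulVec (X₀ w) 0) z = 0
      have hEq : (fun w => Xτ w 0 - L.mulVec (X₀ w) 0)
          = fun w => Xτ w 0 - (Real.cos τ * X₀ w 0 + (-Real.sin τ) * X₀ w 1) := by
        funext w
        rw [hL]
        simp [Matrix.mulVec, dotProduct, Fin.sum_univ_four]
      rw [hEq]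
      apply aux_fderiv_eq_zero_of_rz _ z
        ((hdXτ 0 z hz).fun_sub (((hdX₀ 0 z hz).const_mul _).fun_add ((hdX₀ 1 z hz).const_mul _)))
      rw [aux_rz_comb _ _ _ _ _ z (hdXτ 0 z hz) (hdX₀ 0 z hz) (hdX₀ 1 z hz),
        Complex.ofReal_neg]
      linear_combination t0 - (Real.cos τ : ℂ) * s0 + (Real.sin τ : ℂ) * s1
        + aux_alg0 (rz P z) (rz Q z) (g z) e _ _ hgz he hecs hcs
    · show fderiv ℝ (fun w => Xτ w 1 - L.mulVec (X₀ w) 1) z = 0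
      have hEq : (fun w => Xτ w 1 - L.mulVec (X₀ w) 1)
          = fun w => Xτ w 1 - (Real.sin τ * X₀ w 0 + Real.cos τ * X₀ w 1) := by
        funext w
        rw [hL]
        simp [Matrix.mulVec, dotProduct, Fin.sum_univ_four]
      rw [hEq]
      apply aux_fderiv_eq_zero_of_rz _ z
        ((hdXτ 1 z hz).fun_sub (((hdX₀ 0 z hz).const_mul _).fun_add ((hdX₀ 1 z hz).const_mul _)))
      rw [aux_rz_comb _ _ _ _ _ z (hdXτ 1 z hz) (hdX₀ 0 z hz) (hdX₀ 1 z hz)]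
      linear_combination t1 - (Real.sin τ : ℂ) * s0 - (Real.cos τ : ℂ) * s1
        + aux_alg1 (rz P z) (rz Q z) (g z) e _ _ hgz he hecs hcs
    · show fderiv ℝ (fun w => Xτ w 2 - L.mulVec (X₀ w) 2) z = 0
      have hEq : (fun w => Xτ w 2 - L.mulVec (X₀ w) 2)
          = fun w => Xτ w 2 - ((1:ℝ) * X₀ w 2 + (0:ℝ) * X₀ w 3) := by
        funext w
        rw [hL]
        simp [Matrix.mulVec, dotProduct, Fin.sum_univ_four]
      rw [hEq]
      apply aux_fderiv_eq_zero_of_rz _ z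
        ((hdXτ 2 z hz).fun_sub (((hdX₀ 2 z hz).const_mul _).fun_add ((hdX₀ 3 z hz).const_mul _)))
      rw [aux_rz_comb _ _ _ _ _ z (hdXτ 2 z hz) (hdX₀ 2 z hz) (hdX₀ 3 z hz)]
      push_cast
      linear_combination t2 - s2
    · show fderiv ℝ (fun w => Xτ w 3 - L.mulVec (X₀ w) 3) z = 0
      have hEq : (fun w => Xτ w 3 - L.mulVec (X₀ w) 3)
          = fun w => Xτ w 3 - ((1:ℝ) * X₀ w 3 + (0:ℝ) * X₀ w 2) := by
        funext w
        rw [hL]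
        simp [Matrix.mulVec, dotProduct, Fin.sum_univ_four]
      rw [hEq]
      apply aux_fderiv_eq_zero_of_rz _ z
        ((hdXτ 3 z hz).fun_sub (((hdX₀ 3 z hz).const_mul _).fun_add ((hdX₀ 2 z hz).const_mul _)))
      rw [aux_rz_comb _ _ _ _ _ z (hdXτ 3 z hz) (hdX₀ 3 z hz) (hdX₀ 2 z hz)]
      push_cast
      linear_combination t3 - s3
  -- differentiability of the difference maps
  have hdiffY : ∀ i, ∀ y ∈ Ω, DifferentiableAt ℝ (fun w => Xτ w i - L.mulVec (X₀ w) i) y := by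
    intro i y hy
    have h2 : DifferentiableAt ℝ (fun w => L.mulVec (X₀ w) i) y := by
      simp only [Matrix.mulVec, dotProduct, Fin.sum_univ_four]
      exact ((((hdX₀ 0 y hy).const_mul _).add ((hdX₀ 1 y hy).const_mul _)).add
        ((hdX₀ 2 y hy).const_mul _)).add ((hdX₀ 3 y hy).const_mul _)
    exact (hdXτ i y hy).sub h2
  -- local constancy
  have hconst : ∀ z ∈ Ω, ∃ ε > 0, Metric.ball z ε ⊆ Ω ∧
      ∀ y ∈ Metric.ball z ε, ∀ i,
        Xτ y i - L.mulVec (X₀ y) i = Xτ z i - L.mulVec (X₀ z) i := by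
    intro z hz
    obtain ⟨ε, hε, hball⟩ := Metric.isOpen_iff.1 hΩopen z hz
    refine ⟨ε, hε, hball, fun y hy i => ?_⟩
    exact (convex_ball z ε).is_const_of_fderivWithin_eq_zero
      (fun w hw => (hdiffY i w (hball hw)).differentiableWithinAt)
      (fun w hw => by
        rw [fderivWithin_of_isOpen Metric.isOpen_ball hw]; exact key w (hball hw) i)
      hy (Metric.mem_ball_self hε)
  -- clopen argument
  refine ⟨fun i => Xτ z₀ i - L.mulVec (X₀ z₀) i, ?_⟩
  have main : Ω ⊆ {z | z ∈ Ω ∧ ∀ i, Xτ z i - L.mulVec (X₀ z) i = Xτ z₀ i - L.mulVec (X₀ z₀) i} := by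
    set u := {z | z ∈ Ω ∧ ∀ i, Xτ z i - L.mulVec (X₀ z) i = Xτ z₀ i - L.mulVec (X₀ z₀) i} with hu_def
    set v := {z | z ∈ Ω ∧ ¬ ∀ i, Xτ z i - L.mulVec (X₀ z) i = Xτ z₀ i - L.mulVec (X₀ z₀) i}
      with hv_def
    have hu : IsOpen u := by
      rw [Metric.isOpen_iff]
      rintro z ⟨hz, hzc⟩
      obtain ⟨ε, hε, hball, hc⟩ := hconst z hz
      exact ⟨ε, hε, fun y hy => ⟨hball hy, fun i => (hc y hy i).trans (hzc i)⟩⟩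
    have hv : IsOpen v := by
      rw [Metric.isOpen_iff]
      rintro z ⟨hz, hzc⟩
      obtain ⟨ε, hε, hball, hc⟩ := hconst z hz
      exact ⟨ε, hε, fun y hy => ⟨hball hy,
        fun hall => hzc (fun i => ((hc y hy i).symm.trans (hall i)))⟩⟩
    have hdisj : Disjoint u v := by
      rw [Set.disjoint_iff]
      rintro z ⟨⟨_, h1⟩, ⟨_, h2⟩⟩
      exact (h2 h1).elim
    have hcover : Ω ⊆ u ∪ v := by
      intro z hz
      by_cases h : ∀ i, Xτ z i - L.mulVec (X₀ z) i = Xτ z₀ i - L.mulVec (X₀ z₀) i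
      · exact Or.inl ⟨hz, h⟩
      · exact Or.inr ⟨hz, h⟩
    exact hΩconn.subset_left_of_subset_union hu hv hdisj hcover
      ⟨z₀, hz₀, hz₀, fun i => rfl⟩
  intro z hz i
  have h := (main hz).2 i
  show Xτ z i = L.mulVec (X₀ z) i + (Xτ z₀ i - L.mulVec (X₀ z₀) i)
  linarith
end

section
/- Let Ω ⊆ ℂ be a nonempty open preconnected set, let g : Ω → ℂ be a function with g(z) ≠ 0 for all z ∈ Ω, let P, Q : Ω → ℝ be C¹ functions, and let η ∈ ℝ. Suppose X₀, X_η : Ω → ℝ⁴ are C¹ maps satisfying, at every point of Ω, (X₀)_z = P_z·(1/g, i/g, 1, 1) + Q_z·(g, −i·g, −1, 1) and (X_η)_z = e^η·P_z·(1/(e^η g), i/(e^η g), 1, 1) + e^{−η}·Q_z·(e^η g, −i·e^η g, −1, 1). Let L_η : ℝ⁴ → ℝ⁴ be the linear map with matrix rows (1, 0, 0, 0), (0, 1, 0, 0), (0, 0, cosh η, sinh η), (0, 0, sinh η, cosh η). Then there exists a constant vector c ∈ ℝ⁴ such that X_η(z) = L_η(X₀(z)) + c for all z ∈ Ω. -/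
open Complex

lemma coer_diff {f : ℂ → ℝ} {z : ℂ} (hf : DifferentiableAt ℝ f z) :
    DifferentiableAt ℝ (fun w => ((f w : ℂ))) z :=
  Complex.ofRealCLM.differentiableAt.comp z hf

lemma rz_eqA {f : ℂ → ℝ} {z : ℂ} (hf : DifferentiableAt ℝ f z) :
    rz f z = (1 / 2 : ℂ) * ((fderiv ℝ f z 1 : ℝ) - Complex.I * (fderiv ℝ f z Complex.I : ℝ)) := by
  have h : fderiv ℝ (fun w => ((f w : ℂ))) z
      = Complex.ofRealCLM.comp (fderiv ℝ f z) :=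
    (Complex.ofRealCLM.hasFDerivAt.comp z hf.hasFDerivAt).fderiv
  simp [rz, wz, pdu, pdv, h]

lemma fderiv_zero_of_rz_zero {f : ℂ → ℝ} {z : ℂ} (hf : DifferentiableAt ℝ f z)
    (h : rz f z = 0) : fderiv ℝ f z = 0 := by
  rw [rz_eqA hf] at h
  have h2 : ((fderiv ℝ f z 1 : ℝ) : ℂ) - Complex.I * (fderiv ℝ f z Complex.I : ℝ) = 0 := by
    field_simp at h; simpa using h
  have ha : fderiv ℝ f z 1 = 0 := by
    have := congrArg Complex.re h2; simpa using this
  have hb : fderiv ℝ f z Complex.I = 0 := by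
    have := congrArg Complex.im h2; simpa using this
  ext v
  have hv : v = v.re • (1 : ℂ) + v.im • Complex.I := by
    simp [Complex.ext_iff]
  calc fderiv ℝ f z v = fderiv ℝ f z (v.re • (1:ℂ) + v.im • Complex.I) := by rw [← hv]
    _ = 0 := by rw [map_add, map_smul, map_smul, ha, hb]; simp

lemma rz_combo {f g0 g1 g2 g3 : ℂ → ℝ} {z : ℂ} (c0 c1 c2 c3 : ℝ)
    (hf : DifferentiableAt ℝ f z) (h0 : DifferentiableAt ℝ g0 z)
    (h1 : DifferentiableAt ℝ g1 z) (h2 : DifferentiableAt ℝ g2 z)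
    (h3 : DifferentiableAt ℝ g3 z) :
    rz (fun w => f w - (c0 * g0 w + c1 * g1 w + c2 * g2 w + c3 * g3 w)) z
      = rz f z - ((c0 : ℂ) * rz g0 z + (c1 : ℂ) * rz g1 z
          + (c2 : ℂ) * rz g2 z + (c3 : ℂ) * rz g3 z) := by
  have H : HasFDerivAt (fun w => f w - (c0 * g0 w + c1 * g1 w + c2 * g2 w + c3 * g3 w))
      (fderiv ℝ f z - (c0 • fderiv ℝ g0 z + c1 • fderiv ℝ g1 z + c2 • fderiv ℝ g2 z
        + c3 • fderiv ℝ g3 z)) z :=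
    hf.hasFDerivAt.sub ((((h0.hasFDerivAt.const_mul c0).add
      (h1.hasFDerivAt.const_mul c1)).add (h2.hasFDerivAt.const_mul c2)).add
      (h3.hasFDerivAt.const_mul c3))
  rw [rz_eqA H.differentiableAt, rz_eqA hf, rz_eqA h0, rz_eqA h1, rz_eqA h2, rz_eqA h3,
    H.fderiv]
  simp only [ContinuousLinearMap.sub_apply, ContinuousLinearMap.add_apply,
    ContinuousLinearMap.coe_smul', Pi.smul_apply, smul_eq_mul]
  push_cast
  ring

lemma const_on {Ω : Set ℂ} (hO : IsOpen Ω) (hc : IsPreconnected Ω) {f : ℂ → ℝ}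
    (hd : ∀ z ∈ Ω, DifferentiableAt ℝ f z) (h0 : ∀ z ∈ Ω, fderiv ℝ f z = 0)
    {x y : ℂ} (hx : x ∈ Ω) (hy : y ∈ Ω) : f y = f x := by
  have hloc : ∀ z ∈ Ω, ∃ ε > 0, Metric.ball z ε ⊆ Ω ∧
      ∀ w ∈ Metric.ball z ε, f w = f z := by
    intro z hz
    obtain ⟨ε, hε, hball⟩ := Metric.isOpen_iff.1 hO z hz
    refine ⟨ε, hε, hball, fun w hw => ?_⟩
    refine ((convex_ball z ε).is_const_of_fderivWithin_eq_zero
      (fun u hu => (hd u (hball hu)).differentiableWithinAt) (fun u hu => ?_) hw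
      (Metric.mem_ball_self hε)).symm.symm
    rw [fderivWithin_of_isOpen Metric.isOpen_ball hu]; exact h0 u (hball hu)
  by_contra hne
  set A := {w | w ∈ Ω ∧ f w = f x} with hA
  set B := {w | w ∈ Ω ∧ f w ≠ f x} with hB
  have hAo : IsOpen A := by
    rw [Metric.isOpen_iff]
    rintro w ⟨hwΩ, hwf⟩
    obtain ⟨ε, hε, hball, hconst⟩ := hloc w hwΩ
    exact ⟨ε, hε, fun u hu => ⟨hball hu, (hconst u hu).trans hwf⟩⟩
  have hBo : IsOpen B := by
    rw [Metric.isOpen_iff]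
    rintro w ⟨hwΩ, hwf⟩
    obtain ⟨ε, hε, hball, hconst⟩ := hloc w hwΩ
    exact ⟨ε, hε, fun u hu => ⟨hball hu, by rw [hconst u hu]; exact hwf⟩⟩
  obtain ⟨w, _, hwA, hwB⟩ := hc A B hAo hBo
    (fun u hu => by by_cases h : f u = f x
                    · exact Or.inl ⟨hu, h⟩
                    · exact Or.inr ⟨hu, h⟩)
    ⟨x, hx, hx, rfl⟩ ⟨y, hy, hy, hne⟩
  exact hwB.2 hwA.2


/-- The hyperbolic deformation is induced by a Lorentz boost of 𝕃⁴. -/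
theorem stmt_13 (Ω : Set ℂ) (hΩne : Ω.Nonempty) (hΩopen : IsOpen Ω)
    (hΩconn : IsPreconnected Ω)
    (g : ℂ → ℂ) (hgne : ∀ z ∈ Ω, g z ≠ 0) (P Q : ℂ → ℝ)
    (hP : ContDiffOn ℝ 1 P Ω) (hQ : ContDiffOn ℝ 1 Q Ω) (η : ℝ)
    (X₀ Xη : ℂ → Fin 4 → ℝ)
    (hX₀ : ∀ i, ContDiffOn ℝ 1 (fun w => X₀ w i) Ω)
    (hXη : ∀ i, ContDiffOn ℝ 1 (fun w => Xη w i) Ω)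
    (hrep₀ : ∀ z ∈ Ω, ∀ i, vz X₀ z i
      = rz P z * ![1 / g z, Complex.I / g z, 1, 1] i
        + rz Q z * ![g z, -Complex.I * g z, -1, 1] i)
    (hrepη : ∀ z ∈ Ω, ∀ i, vz Xη z i
      = (Real.exp η : ℂ) * rz P z * ![1 / ((Real.exp η : ℂ) * g z),
          Complex.I / ((Real.exp η : ℂ) * g z), 1, 1] i
        + (Real.exp (-η) : ℂ) * rz Q z * ![(Real.exp η : ℂ) * g z,
            -Complex.I * ((Real.exp η : ℂ) * g z), -1, 1] i)
    (L : Matrix (Fin 4) (Fin 4) ℝ)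
    (hL : L = !![1, 0, 0, 0;
                 0, 1, 0, 0;
                 0, 0, Real.cosh η, Real.sinh η;
                 0, 0, Real.sinh η, Real.cosh η]) :
    ∃ c : Fin 4 → ℝ, ∀ z ∈ Ω, ∀ i, Xη z i = L.mulVec (X₀ z) i + c i := by
  obtain ⟨z₀, hz₀⟩ := hΩne
  have hdη : ∀ i, ∀ z ∈ Ω, DifferentiableAt ℝ (fun w => Xη w i) z := fun i z hz =>
    (((hXη i).differentiableOn one_ne_zero) z hz).differentiableAt (hΩopen.mem_nhds hz)
  have hd₀ : ∀ i, ∀ z ∈ Ω, DifferentiableAt ℝ (fun w => X₀ w i) z := fun i z hz =>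
    (((hX₀ i).differentiableOn one_ne_zero) z hz).differentiableAt (hΩopen.mem_nhds hz)
  have hmv : ∀ (x : Fin 4 → ℝ) (i : Fin 4),
      L.mulVec x i = L i 0 * x 0 + L i 1 * x 1 + L i 2 * x 2 + L i 3 * x 3 := by
    intro x i
    simp [Matrix.mulVec, dotProduct, Fin.sum_univ_four]
  have hdcombo : ∀ (i : Fin 4), ∀ z ∈ Ω, DifferentiableAt ℝ
      (fun w => Xη w i - (L i 0 * X₀ w 0 + L i 1 * X₀ w 1 + L i 2 * X₀ w 2
        + L i 3 * X₀ w 3)) z := by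
    intro i z hz
    exact (hdη i z hz).sub (((((hd₀ 0 z hz).const_mul _).add
      ((hd₀ 1 z hz).const_mul _)).add ((hd₀ 2 z hz).const_mul _)).add
      ((hd₀ 3 z hz).const_mul _))
  have hrz0 : ∀ (i : Fin 4), ∀ z ∈ Ω, rz
      (fun w => Xη w i - (L i 0 * X₀ w 0 + L i 1 * X₀ w 1 + L i 2 * X₀ w 2
        + L i 3 * X₀ w 3)) z = 0 := by
    intro i z hz
    rw [rz_combo (L i 0) (L i 1) (L i 2) (L i 3) (hdη i z hz) (hd₀ 0 z hz)
      (hd₀ 1 z hz) (hd₀ 2 z hz) (hd₀ 3 z hz)]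
    have Hη := hrepη z hz i
    have H0 := hrep₀ z hz 0
    have H1 := hrep₀ z hz 1
    have H2 := hrep₀ z hz 2
    have H3 := hrep₀ z hz 3
    simp only [vz] at Hη H0 H1 H2 H3
    rw [Hη, H0, H1, H2, H3]
    have hg := hgne z hz
    have hcosh : (Real.cosh η : ℂ) = (Complex.exp η + Complex.exp (-η)) / 2 := by
      rw [Real.cosh_eq]; push_cast; ring
    have hsinh : (Real.sinh η : ℂ) = (Complex.exp η - Complex.exp (-η)) / 2 := by
      rw [Real.sinh_eq]; push_cast; ring
    have hexp : ∀ x : ℝ, ((Real.exp x : ℝ) : ℂ) = Complex.exp x := fun x =>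
      Complex.ofReal_exp x
    fin_cases i <;>
      simp [hL, Matrix.cons_val_zero, Matrix.cons_val_one, Matrix.head_cons,
        Matrix.cons_val_two, Matrix.tail_cons, Matrix.cons_val_three, Matrix.cons_val',
        Matrix.empty_val', Matrix.cons_val_fin_one, Matrix.head_fin_const, Fin.isValue,
        Matrix.vecHead, Matrix.vecTail, Complex.cosh, Complex.sinh,
        hexp, hcosh, hsinh] <;>
      push_cast [Complex.exp_neg] <;>
      field_simp [Complex.exp_ne_zero] <;>
      ring
  have key : ∀ (i : Fin 4), ∀ z ∈ Ω,
      Xη z i - (L i 0 * X₀ z 0 + L i 1 * X₀ z 1 + L i 2 * X₀ z 2 + L i 3 * X₀ z 3)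
        = Xη z₀ i - (L i 0 * X₀ z₀ 0 + L i 1 * X₀ z₀ 1 + L i 2 * X₀ z₀ 2
            + L i 3 * X₀ z₀ 3) := by
    intro i z hz
    exact const_on hΩopen hΩconn (hdcombo i)
      (fun w hw => fderiv_zero_of_rz_zero (hdcombo i w hw) (hrz0 i w hw)) hz₀ hz
  refine ⟨fun i => Xη z₀ i - L.mulVec (X₀ z₀) i, fun z hz i => ?_⟩
  have := key i z hz
  simp only [hmv]
  linarith [this]
end

section
/- Let θ ∈ ℝ and define h : ℂ → ℂ by h(z) := e^{iz}, and M_θ, N_θ : ℝ² → ℝ by M_θ(u, v) := cos θ · sinh u · sin u − sin θ · cos u · cos v and N_θ(u, v) := e^v·(cos θ · cosh u + sin θ · sin v). Then for all (u, v) ∈ ℝ²: (i) ∂_u∂_u M_θ + ∂_v∂_v M_θ = e^{−v}·cos u · (∂_u∂_u N_θ + ∂_v∂_v N_θ), i.e. (M_θ)_{zz̄} = (Re h)·(N_θ)_{zz̄}; (ii) (M_θ)_z − (Re h)·(N_θ)_z = (i/2)·e^{−iu}·(cos θ · cosh u + sin θ · cos v). In particular, (M_θ)_z − (Re h)·(N_θ)_z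 ≠ 0 at every point (u, v) where cos θ · cosh u + sin θ · cos v ≠ 0, so (h, M_θ, N_θ) is a Weierstrass data of the second kind on any open set where cos θ · cosh u + sin θ · cos v ≠ 0. -/
open Complex

/-- Second iterated directional derivative `∂_u ∂_u f`. -/
noncomputable def pduu (f : ℂ → ℂ) (z : ℂ) : ℂ := pdu (fun w => pdu f w) z

/-- Second iterated directional derivative `∂_v ∂_v f`. -/
noncomputable def pdvv (f : ℂ → ℂ) (z : ℂ) : ℂ := pdv (fun w => pdv f w) z

noncomputable def reCl : ℂ →L[ℝ] ℂ := Complex.ofRealCLM.comp Complex.reCLM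
noncomputable def imCl : ℂ →L[ℝ] ℂ := Complex.ofRealCLM.comp Complex.imCLM
lemma reCl_apply (w : ℂ) : reCl w = (w.re : ℂ) := rfl
lemma imCl_apply (w : ℂ) : imCl w = (w.im : ℂ) := rfl

lemma basicR {g g' : ℂ → ℂ} (hg : ∀ w, HasDerivAt g (g' w) w) (z : ℂ) :
    HasFDerivAt (fun w : ℂ => g ((w.re : ℂ)))
      ((((1 : ℂ →L[ℂ] ℂ).smulRight (g' ((z.re:ℂ)))).restrictScalars ℝ).comp reCl) z :=
  ((hg _).hasFDerivAt.restrictScalars ℝ).comp z (reCl.hasFDerivAt)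

lemma basicV {g g' : ℂ → ℂ} (hg : ∀ w, HasDerivAt g (g' w) w) (z : ℂ) :
    HasFDerivAt (fun w : ℂ => g ((w.im : ℂ)))
      ((((1 : ℂ →L[ℂ] ℂ).smulRight (g' ((z.im:ℂ)))).restrictScalars ℝ).comp imCl) z :=
  ((hg _).hasFDerivAt.restrictScalars ℝ).comp z (imCl.hasFDerivAt)

lemma pdu_eq {f : ℂ → ℂ} {p q : ℂ} {z : ℂ}
    (h : HasFDerivAt f (p • reCl + q • imCl) z) : pdu f z = p := by
  rw [pdu, h.fderiv]; simp [reCl_apply, imCl_apply]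

lemma pdv_eq {f : ℂ → ℂ} {p q : ℂ} {z : ℂ}
    (h : HasFDerivAt f (p • reCl + q • imCl) z) : pdv f z = q := by
  rw [pdv, h.fderiv]; simp [reCl_apply, imCl_apply]

lemma hasF_M (a b : ℂ) (z : ℂ) :
    HasFDerivAt (fun z : ℂ => a * (Complex.sinh z.re * Complex.sin z.re)
        - b * (Complex.cos z.re * Complex.cos z.im))
      ((a * (Complex.cosh z.re * Complex.sin z.re + Complex.sinh z.re * Complex.cos z.re)
          + b * (Complex.sin z.re * Complex.cos z.im)) • reCl
        + (b * (Complex.cos z.re * Complex.sin z.im)) • imCl) z := by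
  have hd := ((((basicR Complex.hasDerivAt_sinh z).mul (basicR Complex.hasDerivAt_sin z)).const_mul a).sub
    (((basicR Complex.hasDerivAt_cos z).mul (basicV Complex.hasDerivAt_cos z)).const_mul b))
  exact hd.congr_fderiv (by ext w; simp [reCl_apply, imCl_apply]; ring)

lemma hasF_Mu (a b : ℂ) (z : ℂ) :
    HasFDerivAt (fun z : ℂ => a * (Complex.cosh z.re * Complex.sin z.re + Complex.sinh z.re * Complex.cos z.re)
        + b * (Complex.sin z.re * Complex.cos z.im))
      ((2 * a * (Complex.cosh z.re * Complex.cos z.re) + b * (Complex.cos z.re * Complex.cos z.im)) • reCl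
        + (-(b * (Complex.sin z.re * Complex.sin z.im))) • imCl) z := by
  have hd := (((((basicR Complex.hasDerivAt_cosh z).mul (basicR Complex.hasDerivAt_sin z)).add
      ((basicR Complex.hasDerivAt_sinh z).mul (basicR Complex.hasDerivAt_cos z))).const_mul a).add
    (((basicR Complex.hasDerivAt_sin z).mul (basicV Complex.hasDerivAt_cos z)).const_mul b))
  exact hd.congr_fderiv (by ext w; simp [reCl_apply, imCl_apply]; ring)

lemma hasF_Mv (b : ℂ) (z : ℂ) :
    HasFDerivAt (fun z : ℂ => b * (Complex.cos z.re * Complex.sin z.im))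
      ((-(b * (Complex.sin z.re * Complex.sin z.im))) • reCl
        + (b * (Complex.cos z.re * Complex.cos z.im)) • imCl) z := by
  have hd := ((basicR Complex.hasDerivAt_cos z).mul (basicV Complex.hasDerivAt_sin z)).const_mul b
  exact hd.congr_fderiv (by ext w; simp [reCl_apply, imCl_apply]; ring)

lemma hasF_N (a b : ℂ) (z : ℂ) :
    HasFDerivAt (fun z : ℂ => Complex.exp z.im * (a * Complex.cosh z.re + b * Complex.sin z.im))
      ((Complex.exp z.im * (a * Complex.sinh z.re)) • reCl
        + (Complex.exp z.im * (a * Complex.cosh z.re + b * Complex.sin z.im)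
            + Complex.exp z.im * (b * Complex.cos z.im)) • imCl) z := by
  have hd := (basicV Complex.hasDerivAt_exp z).mul
    (((basicR Complex.hasDerivAt_cosh z).const_mul a).add ((basicV Complex.hasDerivAt_sin z).const_mul b))
  exact hd.congr_fderiv (by ext w; simp [reCl_apply, imCl_apply]; ring)

lemma hasF_Nu (a : ℂ) (z : ℂ) :
    HasFDerivAt (fun z : ℂ => Complex.exp z.im * (a * Complex.sinh z.re))
      ((Complex.exp z.im * (a * Complex.cosh z.re)) • reCl
        + (Complex.exp z.im * (a * Complex.sinh z.re)) • imCl) z := by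
  have hd := (basicV Complex.hasDerivAt_exp z).mul ((basicR Complex.hasDerivAt_sinh z).const_mul a)
  exact hd.congr_fderiv (by ext w; simp [reCl_apply, imCl_apply]; ring)

lemma hasF_Nv (a b : ℂ) (z : ℂ) :
    HasFDerivAt (fun z : ℂ => Complex.exp z.im * (a * Complex.cosh z.re + b * Complex.sin z.im)
        + Complex.exp z.im * (b * Complex.cos z.im))
      ((Complex.exp z.im * (a * Complex.sinh z.re)) • reCl
        + (Complex.exp z.im * (a * Complex.cosh z.re) + 2 * (Complex.exp z.im * (b * Complex.cos z.im))) • imCl) z := by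
  have hd := ((basicV Complex.hasDerivAt_exp z).mul
      (((basicR Complex.hasDerivAt_cosh z).const_mul a).add ((basicV Complex.hasDerivAt_sin z).const_mul b))).add
    ((basicV Complex.hasDerivAt_exp z).mul ((basicV Complex.hasDerivAt_cos z).const_mul b))
  exact hd.congr_fderiv (by ext w; simp [reCl_apply, imCl_apply]; ring)

/-- The family of Weierstrass data of the second kind interpolating between
a catenoid cousin in ℍ³ and a hyperbolic catenoid cousin in 𝕊³₁. -/
theorem stmt_14 (θ : ℝ)
    (h : ℂ → ℂ) (hh : h = fun z => Complex.exp (Complex.I * z))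
    (M : ℂ → ℝ)
    (hM : M = fun z => Real.cos θ * Real.sinh z.re * Real.sin z.re
      - Real.sin θ * Real.cos z.re * Real.cos z.im)
    (N : ℂ → ℝ)
    (hN : N = fun z => Real.exp z.im *
      (Real.cos θ * Real.cosh z.re + Real.sin θ * Real.sin z.im)) :
    (∀ z : ℂ,
      pduu (fun w => (M w : ℂ)) z + pdvv (fun w => (M w : ℂ)) z
        = ((Real.exp (-z.im) * Real.cos z.re : ℝ) : ℂ) *
            (pduu (fun w => (N w : ℂ)) z + pdvv (fun w => (N w : ℂ)) z)) ∧
    (∀ z : ℂ, rzzb M z = (((h z).re : ℂ)) * rzzb N z) ∧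
    (∀ z : ℂ, rz M z - (((h z).re : ℂ)) * rz N z
      = (Complex.I / 2) * Complex.exp (-(Complex.I * z.re)) *
          ((Real.cos θ * Real.cosh z.re + Real.sin θ * Real.cos z.im : ℝ) : ℂ)) ∧
    (∀ z : ℂ, Real.cos θ * Real.cosh z.re + Real.sin θ * Real.cos z.im ≠ 0 →
      rz M z - (((h z).re : ℂ)) * rz N z ≠ 0) ∧
    (∀ Ω : Set ℂ, IsOpen Ω →
      (∀ z ∈ Ω, Real.cos θ * Real.cosh z.re + Real.sin θ * Real.cos z.im ≠ 0) →
      IsWD2 Ω h M N) := by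
  have hMf : (fun w : ℂ => ((M w : ℝ) : ℂ)) = fun z : ℂ =>
      (Real.cos θ : ℂ) * (Complex.sinh z.re * Complex.sin z.re)
        - (Real.sin θ : ℂ) * (Complex.cos z.re * Complex.cos z.im) := by
    funext w; simp only [hM]; push_cast; ring
  have hNf : (fun w : ℂ => ((N w : ℝ) : ℂ)) = fun z : ℂ =>
      Complex.exp z.im * ((Real.cos θ : ℂ) * Complex.cosh z.re + (Real.sin θ : ℂ) * Complex.sin z.im) := by
    funext w; simp only [hN]; push_cast; ring
  have hre : ∀ z : ℂ, (((h z).re : ℝ) : ℂ) = Complex.exp (-(z.im : ℂ)) * Complex.cos (z.re : ℂ) := by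
    intro z
    simp only [hh, Complex.exp_re, Complex.mul_re, Complex.mul_im, Complex.I_re, Complex.I_im]
    push_cast
    ring_nf
  -- first derivative functions
  have hMu : (fun w => pdu (fun w' : ℂ => ((M w' : ℝ) : ℂ)) w) = fun z : ℂ =>
      (Real.cos θ : ℂ) * (Complex.cosh z.re * Complex.sin z.re + Complex.sinh z.re * Complex.cos z.re)
        + (Real.sin θ : ℂ) * (Complex.sin z.re * Complex.cos z.im) := by
    funext w; rw [hMf]; exact pdu_eq (hasF_M _ _ w)
  have hMv : (fun w => pdv (fun w' : ℂ => ((M w' : ℝ) : ℂ)) w) = fun z : ℂ =>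
      (Real.sin θ : ℂ) * (Complex.cos z.re * Complex.sin z.im) := by
    funext w; rw [hMf]; exact pdv_eq (hasF_M _ _ w)
  have hNu : (fun w => pdu (fun w' : ℂ => ((N w' : ℝ) : ℂ)) w) = fun z : ℂ =>
      Complex.exp z.im * ((Real.cos θ : ℂ) * Complex.sinh z.re) := by
    funext w; rw [hNf]; exact pdu_eq (hasF_N _ _ w)
  have hNv : (fun w => pdv (fun w' : ℂ => ((N w' : ℝ) : ℂ)) w) = fun z : ℂ =>
      Complex.exp z.im * ((Real.cos θ : ℂ) * Complex.cosh z.re + (Real.sin θ : ℂ) * Complex.sin z.im)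
        + Complex.exp z.im * ((Real.sin θ : ℂ) * Complex.cos z.im) := by
    funext w; rw [hNf]; exact pdv_eq (hasF_N _ _ w)
  -- part (i)
  have part1 : ∀ z : ℂ,
      pduu (fun w => (M w : ℂ)) z + pdvv (fun w => (M w : ℂ)) z
        = ((Real.exp (-z.im) * Real.cos z.re : ℝ) : ℂ) *
            (pduu (fun w => (N w : ℂ)) z + pdvv (fun w => (N w : ℂ)) z) := by
    intro z
    rw [pduu, pdvv, pduu, pdvv, hMu, hMv, hNu, hNv,
      pdu_eq (hasF_Mu _ _ z), pdv_eq (hasF_Mv _ z),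
      pdu_eq (hasF_Nu _ z), pdv_eq (hasF_Nv _ _ z)]
    push_cast
    rw [Complex.exp_neg]
    field_simp
    ring
  -- rzzb values
  have hrzzbM : ∀ z : ℂ, rzzb M z = (1/2 : ℂ) * Complex.cos z.re *
      ((Real.cos θ : ℂ) * Complex.cosh z.re + (Real.sin θ : ℂ) * Complex.cos z.im) := by
    intro z
    rw [rzzb, wzzb, wzb]
    have hG : (fun w => wz (fun w' : ℂ => ((M w' : ℝ) : ℂ)) w) = fun z : ℂ =>
        (1/2 : ℂ) * (((Real.cos θ : ℂ) * (Complex.cosh z.re * Complex.sin z.re + Complex.sinh z.re * Complex.cos z.re)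
            + (Real.sin θ : ℂ) * (Complex.sin z.re * Complex.cos z.im))
          - Complex.I * ((Real.sin θ : ℂ) * (Complex.cos z.re * Complex.sin z.im))) := by
      funext w
      rw [wz, hMf, pdu_eq (hasF_M _ _ w), pdv_eq (hasF_M _ _ w)]
    rw [hG]
    have hGd : HasFDerivAt (fun z : ℂ =>
        (1/2 : ℂ) * (((Real.cos θ : ℂ) * (Complex.cosh z.re * Complex.sin z.re + Complex.sinh z.re * Complex.cos z.re)
            + (Real.sin θ : ℂ) * (Complex.sin z.re * Complex.cos z.im))
          - Complex.I * ((Real.sin θ : ℂ) * (Complex.cos z.re * Complex.sin z.im))))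
        (((1/2 : ℂ)) • (((2 * (Real.cos θ : ℂ) * (Complex.cosh z.re * Complex.cos z.re)
            + (Real.sin θ : ℂ) * (Complex.cos z.re * Complex.cos z.im)) • reCl
          + (-((Real.sin θ : ℂ) * (Complex.sin z.re * Complex.sin z.im))) • imCl)
          - Complex.I • ((-((Real.sin θ : ℂ) * (Complex.sin z.re * Complex.sin z.im))) • reCl
          + ((Real.sin θ : ℂ) * (Complex.cos z.re * Complex.cos z.im)) • imCl))) z :=
      ((hasF_Mu _ _ z).sub ((hasF_Mv _ z).const_mul Complex.I)).const_mul (1/2 : ℂ)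
    rw [pdu, pdv, hGd.fderiv]
    simp [reCl_apply, imCl_apply]
    ring_nf
    simp only [Complex.I_sq]
    ring
  have hrzzbN : ∀ z : ℂ, rzzb N z = (1/2 : ℂ) * Complex.exp z.im *
      ((Real.cos θ : ℂ) * Complex.cosh z.re + (Real.sin θ : ℂ) * Complex.cos z.im) := by
    intro z
    rw [rzzb, wzzb, wzb]
    have hG : (fun w => wz (fun w' : ℂ => ((N w' : ℝ) : ℂ)) w) = fun z : ℂ =>
        (1/2 : ℂ) * ((Complex.exp z.im * ((Real.cos θ : ℂ) * Complex.sinh z.re))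
          - Complex.I * (Complex.exp z.im * ((Real.cos θ : ℂ) * Complex.cosh z.re + (Real.sin θ : ℂ) * Complex.sin z.im)
            + Complex.exp z.im * ((Real.sin θ : ℂ) * Complex.cos z.im))) := by
      funext w
      rw [wz, hNf, pdu_eq (hasF_N _ _ w), pdv_eq (hasF_N _ _ w)]
    rw [hG]
    have hGd : HasFDerivAt (fun z : ℂ =>
        (1/2 : ℂ) * ((Complex.exp z.im * ((Real.cos θ : ℂ) * Complex.sinh z.re))
          - Complex.I * (Complex.exp z.im * ((Real.cos θ : ℂ) * Complex.cosh z.re + (Real.sin θ : ℂ) * Complex.sin z.im)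
            + Complex.exp z.im * ((Real.sin θ : ℂ) * Complex.cos z.im))))
        (((1/2 : ℂ)) • (((Complex.exp z.im * ((Real.cos θ : ℂ) * Complex.cosh z.re)) • reCl
          + (Complex.exp z.im * ((Real.cos θ : ℂ) * Complex.sinh z.re)) • imCl)
          - Complex.I • ((Complex.exp z.im * ((Real.cos θ : ℂ) * Complex.sinh z.re)) • reCl
          + (Complex.exp z.im * ((Real.cos θ : ℂ) * Complex.cosh z.re)
              + 2 * (Complex.exp z.im * ((Real.sin θ : ℂ) * Complex.cos z.im))) • imCl))) z :=
      ((hasF_Nu _ z).sub ((hasF_Nv _ _ z).const_mul Complex.I)).const_mul (1/2 : ℂ)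
    rw [pdu, pdv, hGd.fderiv]
    simp [reCl_apply, imCl_apply]
    ring_nf
    simp only [Complex.I_sq]
    ring
  have part2 : ∀ z : ℂ, rzzb M z = (((h z).re : ℂ)) * rzzb N z := by
    intro z
    rw [hrzzbM z, hrzzbN z, hre z, Complex.exp_neg]
    field_simp
  -- rz values
  have hrzM : ∀ z : ℂ, rz M z = (1/2 : ℂ) *
      (((Real.cos θ : ℂ) * (Complex.cosh z.re * Complex.sin z.re + Complex.sinh z.re * Complex.cos z.re)
          + (Real.sin θ : ℂ) * (Complex.sin z.re * Complex.cos z.im))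
        - Complex.I * ((Real.sin θ : ℂ) * (Complex.cos z.re * Complex.sin z.im))) := by
    intro z
    rw [rz, wz, hMf, pdu_eq (hasF_M _ _ z), pdv_eq (hasF_M _ _ z)]
  have hrzN : ∀ z : ℂ, rz N z = (1/2 : ℂ) *
      ((Complex.exp z.im * ((Real.cos θ : ℂ) * Complex.sinh z.re))
        - Complex.I * (Complex.exp z.im * ((Real.cos θ : ℂ) * Complex.cosh z.re + (Real.sin θ : ℂ) * Complex.sin z.im)
          + Complex.exp z.im * ((Real.sin θ : ℂ) * Complex.cos z.im))) := by
    intro z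
    rw [rz, wz, hNf, pdu_eq (hasF_N _ _ z), pdv_eq (hasF_N _ _ z)]
  have part3 : ∀ z : ℂ, rz M z - (((h z).re : ℂ)) * rz N z
      = (Complex.I / 2) * Complex.exp (-(Complex.I * z.re)) *
          ((Real.cos θ * Real.cosh z.re + Real.sin θ * Real.cos z.im : ℝ) : ℂ) := by
    intro z
    rw [hrzM z, hrzN z, hre z]
    have hx : -(Complex.I * (z.re : ℂ)) = (-(z.re : ℂ)) * Complex.I := by ring
    rw [hx, Complex.exp_mul_I, Complex.cos_neg, Complex.sin_neg]
    push_cast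
    rw [Complex.exp_neg]
    field_simp
    ring_nf
    simp only [Complex.I_sq]
    ring
  have part4 : ∀ z : ℂ, Real.cos θ * Real.cosh z.re + Real.sin θ * Real.cos z.im ≠ 0 →
      rz M z - (((h z).re : ℂ)) * rz N z ≠ 0 := by
    intro z hA
    rw [part3 z]
    exact mul_ne_zero (mul_ne_zero (div_ne_zero Complex.I_ne_zero two_ne_zero)
      (Complex.exp_ne_zero _)) (Complex.ofReal_ne_zero.mpr hA)
  refine ⟨part1, part2, part3, part4, ?_⟩
  intro Ω _ hΩ
  have hre2 : ContDiff ℝ 2 (fun z : ℂ => z.re) := Complex.reCLM.contDiff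
  have him2 : ContDiff ℝ 2 (fun z : ℂ => z.im) := Complex.imCLM.contDiff
  refine ⟨?_, ?_, ?_, ?_, fun z _ => part2 z, fun z hz => part4 z (hΩ z hz)⟩
  · intro z _
    rw [hh]
    exact (differentiableAt_id.const_mul Complex.I).cexp
  · intro z _
    rw [hh]
    exact Complex.exp_ne_zero _
  · rw [hM]
    exact (((contDiff_const.mul (Real.contDiff_sinh.comp hre2)).mul (Real.contDiff_sin.comp hre2)).sub
      ((contDiff_const.mul (Real.contDiff_cos.comp hre2)).mul (Real.contDiff_cos.comp him2))).contDiffOn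
  · rw [hN]
    exact ((Real.contDiff_exp.comp him2).mul ((contDiff_const.mul (Real.contDiff_cosh.comp hre2)).add
      (contDiff_const.mul (Real.contDiff_sin.comp him2)))).contDiffOn
end

section
/- Let α, β ∈ ℝ with α² + β² < 1. Define h : ℂ → ℂ by h(z) := e^{iz}, and M, N : ℝ² → ℝ by M(u, v) := α·u + β·v + sinh u · sin u and N(u, v) := e^v·cosh u. Then for all (u, v) ∈ ℝ²: (i) ∂_u∂_u M + ∂_v∂_v M = e^{−v}·cos u · (∂_u∂_u N + ∂_v∂_v N), i.e. M_{zz̄} = (Re h)·N_{zz̄}; (ii) M_z − (Re h)·N_z = (1/2)·((α + cosh u · sin u) + i·(−β + cosh u · cos u)); (iii) M_z − (Re h)·N_z ≠ 0 (indeed, (α + cosh u · sin u, −β + cosh u · cos u) ≠ (0, 0), since otherwise cosh²u = α² + β² < 1, a contradiction). Hence (h, M, N) is a Weierstrass data of the second kind on ℂ. -/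
open Complex

section Aux

lemma pdu_of {f : ℂ → ℂ} {L : ℂ →L[ℝ] ℂ} {z : ℂ} (h : HasFDerivAt f L z) :
    pdu f z = L 1 := by rw [pdu, h.fderiv]
lemma pdv_of {f : ℂ → ℂ} {L : ℂ →L[ℝ] ℂ} {z : ℂ} (h : HasFDerivAt f L z) :
    pdv f z = L Complex.I := by rw [pdv, h.fderiv]

variable (α β : ℝ) (z : ℂ)

private lemma hre' : HasFDerivAt (fun w : ℂ => w.re) Complex.reCLM z := Complex.reCLM.hasFDerivAt
private lemma him' : HasFDerivAt (fun w : ℂ => w.im) Complex.imCLM z := Complex.imCLM.hasFDerivAt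

lemma pdu_M :
    pdu (fun w : ℂ => ((α * w.re + β * w.im + Real.sinh w.re * Real.sin w.re : ℝ) : ℂ)) z
      = ((α + (Real.sinh z.re * Real.cos z.re + Real.cosh z.re * Real.sin z.re) : ℝ) : ℂ) := by
  have h := Complex.ofRealCLM.hasFDerivAt.comp z
    ((((hre' z).const_mul α).add ((him' z).const_mul β)).add
      (((Real.hasDerivAt_sinh z.re).comp_hasFDerivAt z (hre' z)).mul
       ((Real.hasDerivAt_sin z.re).comp_hasFDerivAt z (hre' z))))
  refine (pdu_of h).trans ?_
  simp
  ring

lemma pdv_M :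
    pdv (fun w : ℂ => ((α * w.re + β * w.im + Real.sinh w.re * Real.sin w.re : ℝ) : ℂ)) z
      = ((β : ℝ) : ℂ) := by
  have h := Complex.ofRealCLM.hasFDerivAt.comp z
    ((((hre' z).const_mul α).add ((him' z).const_mul β)).add
      (((Real.hasDerivAt_sinh z.re).comp_hasFDerivAt z (hre' z)).mul
       ((Real.hasDerivAt_sin z.re).comp_hasFDerivAt z (hre' z))))
  refine (pdv_of h).trans ?_
  simp

lemma pdu_g2 :
    pdu (fun w : ℂ => ((α + (Real.sinh w.re * Real.cos w.re + Real.cosh w.re * Real.sin w.re) : ℝ) : ℂ)) z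
      = ((2 * (Real.cosh z.re * Real.cos z.re) : ℝ) : ℂ) := by
  have h := Complex.ofRealCLM.hasFDerivAt.comp z
    (((((Real.hasDerivAt_sinh z.re).comp_hasFDerivAt z (hre' z)).mul
        ((Real.hasDerivAt_cos z.re).comp_hasFDerivAt z (hre' z))).add
      (((Real.hasDerivAt_cosh z.re).comp_hasFDerivAt z (hre' z)).mul
        ((Real.hasDerivAt_sin z.re).comp_hasFDerivAt z (hre' z)))).const_add α)
  refine (pdu_of h).trans ?_
  simp
  ring

lemma pdv_g2 :
    pdv (fun w : ℂ => ((α + (Real.sinh w.re * Real.cos w.re + Real.cosh w.re * Real.sin w.re) : ℝ) : ℂ)) z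
      = 0 := by
  have h := Complex.ofRealCLM.hasFDerivAt.comp z
    (((((Real.hasDerivAt_sinh z.re).comp_hasFDerivAt z (hre' z)).mul
        ((Real.hasDerivAt_cos z.re).comp_hasFDerivAt z (hre' z))).add
      (((Real.hasDerivAt_cosh z.re).comp_hasFDerivAt z (hre' z)).mul
        ((Real.hasDerivAt_sin z.re).comp_hasFDerivAt z (hre' z)))).const_add α)
  refine (pdv_of h).trans ?_
  simp

lemma pdu_const (c : ℂ) : pdu (fun _ : ℂ => c) z = 0 := by
  refine (pdu_of (hasFDerivAt_const c z)).trans ?_; simp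
lemma pdv_const (c : ℂ) : pdv (fun _ : ℂ => c) z = 0 := by
  refine (pdv_of (hasFDerivAt_const c z)).trans ?_; simp

lemma pdu_N :
    pdu (fun w : ℂ => ((Real.exp w.im * Real.cosh w.re : ℝ) : ℂ)) z
      = ((Real.exp z.im * Real.sinh z.re : ℝ) : ℂ) := by
  have h := Complex.ofRealCLM.hasFDerivAt.comp z
    (((Real.hasDerivAt_exp z.im).comp_hasFDerivAt z (him' z)).mul
     ((Real.hasDerivAt_cosh z.re).comp_hasFDerivAt z (hre' z)))
  refine (pdu_of h).trans ?_
  simp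

lemma pdv_N :
    pdv (fun w : ℂ => ((Real.exp w.im * Real.cosh w.re : ℝ) : ℂ)) z
      = ((Real.exp z.im * Real.cosh z.re : ℝ) : ℂ) := by
  have h := Complex.ofRealCLM.hasFDerivAt.comp z
    (((Real.hasDerivAt_exp z.im).comp_hasFDerivAt z (him' z)).mul
     ((Real.hasDerivAt_cosh z.re).comp_hasFDerivAt z (hre' z)))
  refine (pdv_of h).trans ?_
  simp
  ring

lemma pdu_g4 :
    pdu (fun w : ℂ => ((Real.exp w.im * Real.sinh w.re : ℝ) : ℂ)) z
      = ((Real.exp z.im * Real.cosh z.re : ℝ) : ℂ) := by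
  have h := Complex.ofRealCLM.hasFDerivAt.comp z
    (((Real.hasDerivAt_exp z.im).comp_hasFDerivAt z (him' z)).mul
     ((Real.hasDerivAt_sinh z.re).comp_hasFDerivAt z (hre' z)))
  refine (pdu_of h).trans ?_
  simp

lemma pdv_g4 :
    pdv (fun w : ℂ => ((Real.exp w.im * Real.sinh w.re : ℝ) : ℂ)) z
      = ((Real.exp z.im * Real.sinh z.re : ℝ) : ℂ) := by
  have h := Complex.ofRealCLM.hasFDerivAt.comp z
    (((Real.hasDerivAt_exp z.im).comp_hasFDerivAt z (him' z)).mul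
     ((Real.hasDerivAt_sinh z.re).comp_hasFDerivAt z (hre' z)))
  refine (pdv_of h).trans ?_
  simp
  ring

-- derivatives of wz M
lemma pdu_wzM :
    pdu (fun w : ℂ => 1 / 2 *
      (((α + (Real.sinh w.re * Real.cos w.re + Real.cosh w.re * Real.sin w.re) : ℝ) : ℂ)
        - Complex.I * ((β : ℝ) : ℂ))) z
      = ((Real.cosh z.re * Real.cos z.re : ℝ) : ℂ) := by
  have hg2 := Complex.ofRealCLM.hasFDerivAt.comp z
    (((((Real.hasDerivAt_sinh z.re).comp_hasFDerivAt z (hre' z)).mul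
        ((Real.hasDerivAt_cos z.re).comp_hasFDerivAt z (hre' z))).add
      (((Real.hasDerivAt_cosh z.re).comp_hasFDerivAt z (hre' z)).mul
        ((Real.hasDerivAt_sin z.re).comp_hasFDerivAt z (hre' z)))).const_add α)
  have h := (hg2.sub_const (Complex.I * ((β : ℝ) : ℂ))).const_mul ((1 : ℂ) / 2)
  refine (pdu_of h).trans ?_
  simp
  ring

lemma pdv_wzM :
    pdv (fun w : ℂ => 1 / 2 *
      (((α + (Real.sinh w.re * Real.cos w.re + Real.cosh w.re * Real.sin w.re) : ℝ) : ℂ)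
        - Complex.I * ((β : ℝ) : ℂ))) z = 0 := by
  have hg2 := Complex.ofRealCLM.hasFDerivAt.comp z
    (((((Real.hasDerivAt_sinh z.re).comp_hasFDerivAt z (hre' z)).mul
        ((Real.hasDerivAt_cos z.re).comp_hasFDerivAt z (hre' z))).add
      (((Real.hasDerivAt_cosh z.re).comp_hasFDerivAt z (hre' z)).mul
        ((Real.hasDerivAt_sin z.re).comp_hasFDerivAt z (hre' z)))).const_add α)
  have h := (hg2.sub_const (Complex.I * ((β : ℝ) : ℂ))).const_mul ((1 : ℂ) / 2)
  refine (pdv_of h).trans ?_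
  simp

-- derivatives of wz N
lemma pdu_wzN :
    pdu (fun w : ℂ => 1 / 2 *
      (((Real.exp w.im * Real.sinh w.re : ℝ) : ℂ)
        - Complex.I * ((Real.exp w.im * Real.cosh w.re : ℝ) : ℂ))) z
      = 1 / 2 * (((Real.exp z.im * Real.cosh z.re : ℝ) : ℂ)
        - Complex.I * ((Real.exp z.im * Real.sinh z.re : ℝ) : ℂ)) := by
  have hA := Complex.ofRealCLM.hasFDerivAt.comp z
    (((Real.hasDerivAt_exp z.im).comp_hasFDerivAt z (him' z)).mul
     ((Real.hasDerivAt_sinh z.re).comp_hasFDerivAt z (hre' z)))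
  have hB := Complex.ofRealCLM.hasFDerivAt.comp z
    (((Real.hasDerivAt_exp z.im).comp_hasFDerivAt z (him' z)).mul
     ((Real.hasDerivAt_cosh z.re).comp_hasFDerivAt z (hre' z)))
  have h := (hA.sub (hB.const_mul Complex.I)).const_mul ((1 : ℂ) / 2)
  refine (pdu_of h).trans ?_
  simp

lemma pdv_wzN :
    pdv (fun w : ℂ => 1 / 2 *
      (((Real.exp w.im * Real.sinh w.re : ℝ) : ℂ)
        - Complex.I * ((Real.exp w.im * Real.cosh w.re : ℝ) : ℂ))) z
      = 1 / 2 * (((Real.exp z.im * Real.sinh z.re : ℝ) : ℂ)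
        - Complex.I * ((Real.exp z.im * Real.cosh z.re : ℝ) : ℂ)) := by
  have hA := Complex.ofRealCLM.hasFDerivAt.comp z
    (((Real.hasDerivAt_exp z.im).comp_hasFDerivAt z (him' z)).mul
     ((Real.hasDerivAt_sinh z.re).comp_hasFDerivAt z (hre' z)))
  have hB := Complex.ofRealCLM.hasFDerivAt.comp z
    (((Real.hasDerivAt_exp z.im).comp_hasFDerivAt z (him' z)).mul
     ((Real.hasDerivAt_cosh z.re).comp_hasFDerivAt z (hre' z)))
  have h := (hA.sub (hB.const_mul Complex.I)).const_mul ((1 : ℂ) / 2)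
  refine (pdv_of h).trans ?_
  simp
  ring

lemma exp_I_mul_re : (Complex.exp (Complex.I * z)).re = Real.exp (-z.im) * Real.cos z.re := by
  rw [Complex.exp_re]
  simp [Complex.mul_re, Complex.mul_im]

lemma hE : Complex.exp (-(z.im : ℂ)) * Complex.exp ((z.im : ℂ)) = 1 := by
  rw [← Complex.exp_add]; simp

-- closed forms
lemma rzzb_M :
    rzzb (fun z => α * z.re + β * z.im + Real.sinh z.re * Real.sin z.re) z
      = 1 / 2 * ((Real.cosh z.re * Real.cos z.re : ℝ) : ℂ) := by
  simp only [rzzb, wzzb, wzb, wz, pdu_M, pdv_M, pdu_wzM, pdv_wzM]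
  ring

lemma rzzb_N :
    rzzb (fun z => Real.exp z.im * Real.cosh z.re) z
      = 1 / 2 * ((Real.exp z.im * Real.cosh z.re : ℝ) : ℂ) := by
  simp only [rzzb, wzzb, wzb, wz, pdu_N, pdv_N, pdu_wzN, pdv_wzN]
  push_cast
  linear_combination (-(1 / 4 : ℂ) * Complex.exp (z.im : ℂ) * Complex.cosh (z.re : ℂ)) *
    Complex.I_sq

lemma rz_M :
    rz (fun z => α * z.re + β * z.im + Real.sinh z.re * Real.sin z.re) z
      = 1 / 2 * (((α + (Real.sinh z.re * Real.cos z.re + Real.cosh z.re * Real.sin z.re) : ℝ) : ℂ)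
          - Complex.I * ((β : ℝ) : ℂ)) := by
  simp only [rz, wz, pdu_M, pdv_M]

lemma rz_N :
    rz (fun z => Real.exp z.im * Real.cosh z.re) z
      = 1 / 2 * (((Real.exp z.im * Real.sinh z.re : ℝ) : ℂ)
          - Complex.I * ((Real.exp z.im * Real.cosh z.re : ℝ) : ℂ)) := by
  simp only [rz, wz, pdu_N, pdv_N]

end Aux

section Parts
variable (α β : ℝ) (z : ℂ)

lemma part1 :
    pduu (fun w : ℂ => ((α * w.re + β * w.im + Real.sinh w.re * Real.sin w.re : ℝ) : ℂ)) z
      + pdvv (fun w : ℂ => ((α * w.re + β * w.im + Real.sinh w.re * Real.sin w.re : ℝ) : ℂ)) z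
      = ((Real.exp (-z.im) * Real.cos z.re : ℝ) : ℂ) *
          (pduu (fun w : ℂ => ((Real.exp w.im * Real.cosh w.re : ℝ) : ℂ)) z
            + pdvv (fun w : ℂ => ((Real.exp w.im * Real.cosh w.re : ℝ) : ℂ)) z) := by
  simp only [pduu, pdvv, pdu_M, pdv_M, pdu_N, pdv_N, pdu_g2, pdv_g2, pdu_g4, pdv_N,
    pdu_const, pdv_const]
  push_cast
  have h := hE z
  linear_combination (-2 * Complex.cos (z.re : ℂ) * Complex.cosh (z.re : ℂ)) * h

lemma part2 :
    rzzb (fun z => α * z.re + β * z.im + Real.sinh z.re * Real.sin z.re) z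
      = (((Complex.exp (Complex.I * z)).re : ℂ)) *
          rzzb (fun z => Real.exp z.im * Real.cosh z.re) z := by
  rw [rzzb_M, rzzb_N, exp_I_mul_re]
  push_cast
  have h := hE z
  linear_combination (-(1 / 2 : ℂ) * Complex.cos (z.re : ℂ) * Complex.cosh (z.re : ℂ)) * h

lemma part3 :
    rz (fun z => α * z.re + β * z.im + Real.sinh z.re * Real.sin z.re) z
      - (((Complex.exp (Complex.I * z)).re : ℂ)) *
          rz (fun z => Real.exp z.im * Real.cosh z.re) z
      = (1 / 2 : ℂ) * (((α + Real.cosh z.re * Real.sin z.re : ℝ) : ℂ)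
          + Complex.I * ((-β + Real.cosh z.re * Real.cos z.re : ℝ) : ℂ)) := by
  rw [rz_M, rz_N, exp_I_mul_re]
  push_cast
  have h := hE z
  linear_combination ((1 / 2 : ℂ) * Complex.I * Complex.cos (z.re : ℂ) * Complex.cosh (z.re : ℂ)
    - (1 / 2 : ℂ) * Complex.sinh (z.re : ℂ) * Complex.cos (z.re : ℂ)) * h

lemma part4 (hαβ : α ^ 2 + β ^ 2 < 1) :
    ((α + Real.cosh z.re * Real.sin z.re : ℝ),
      (-β + Real.cosh z.re * Real.cos z.re : ℝ)) ≠ ((0 : ℝ), (0 : ℝ)) := by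
  intro hcon
  rw [Prod.mk.injEq] at hcon
  obtain ⟨h1, h2⟩ := hcon
  have e1 : Real.cosh z.re * Real.sin z.re = -α := by linarith
  have e2 : Real.cosh z.re * Real.cos z.re = β := by linarith
  have hs := Real.sin_sq_add_cos_sq z.re
  have hc := Real.one_le_cosh z.re
  have key : Real.cosh z.re ^ 2 = α ^ 2 + β ^ 2 := by
    calc Real.cosh z.re ^ 2 = Real.cosh z.re ^ 2 * (Real.sin z.re ^ 2 + Real.cos z.re ^ 2) := by
          rw [hs]; ring
      _ = (Real.cosh z.re * Real.sin z.re) ^ 2 + (Real.cosh z.re * Real.cos z.re) ^ 2 := by ring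
      _ = α ^ 2 + β ^ 2 := by rw [e1, e2]; ring
  have h1' : 1 ≤ Real.cosh z.re ^ 2 := by nlinarith [hc]
  linarith [key, h1', hαβ]

lemma part5 (hαβ : α ^ 2 + β ^ 2 < 1) :
    rz (fun z => α * z.re + β * z.im + Real.sinh z.re * Real.sin z.re) z
      - (((Complex.exp (Complex.I * z)).re : ℂ)) *
          rz (fun z => Real.exp z.im * Real.cosh z.re) z ≠ 0 := by
  rw [part3]
  intro hcon
  have h2 : (((α + Real.cosh z.re * Real.sin z.re : ℝ) : ℂ)
      + Complex.I * ((-β + Real.cosh z.re * Real.cos z.re : ℝ) : ℂ)) = 0 := by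
    have : (1 / 2 : ℂ) ≠ 0 := by norm_num
    exact (mul_eq_zero.mp hcon).resolve_left this
  rw [Complex.ext_iff] at h2
  simp only [Complex.add_re, Complex.add_im, Complex.mul_re, Complex.mul_im, Complex.I_re,
    Complex.I_im, Complex.ofReal_re, Complex.ofReal_im, Complex.zero_re, Complex.zero_im] at h2
  exact part4 α β z hαβ (by rw [Prod.mk.injEq]; constructor <;> [linarith [h2.1]; linarith [h2.2]])

end Parts

/-- A two-parameter family of Weierstrass data of the second kind deforming
the catenoid cousin. -/
theorem stmt_18 (α β : ℝ) (hαβ : α ^ 2 + β ^ 2 < 1)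
    (h : ℂ → ℂ) (hh : h = fun z => Complex.exp (Complex.I * z))
    (M : ℂ → ℝ)
    (hM : M = fun z => α * z.re + β * z.im + Real.sinh z.re * Real.sin z.re)
    (N : ℂ → ℝ) (hN : N = fun z => Real.exp z.im * Real.cosh z.re) :
    (∀ z : ℂ,
      pduu (fun w => (M w : ℂ)) z + pdvv (fun w => (M w : ℂ)) z
        = ((Real.exp (-z.im) * Real.cos z.re : ℝ) : ℂ) *
            (pduu (fun w => (N w : ℂ)) z + pdvv (fun w => (N w : ℂ)) z)) ∧
    (∀ z : ℂ, rzzb M z = (((h z).re : ℂ)) * rzzb N z) ∧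
    (∀ z : ℂ, rz M z - (((h z).re : ℂ)) * rz N z
      = (1 / 2 : ℂ) * (((α + Real.cosh z.re * Real.sin z.re : ℝ) : ℂ)
          + Complex.I * ((-β + Real.cosh z.re * Real.cos z.re : ℝ) : ℂ))) ∧
    (∀ z : ℂ, ((α + Real.cosh z.re * Real.sin z.re : ℝ),
        (-β + Real.cosh z.re * Real.cos z.re : ℝ)) ≠ (0, 0)) ∧
    (∀ z : ℂ, rz M z - (((h z).re : ℂ)) * rz N z ≠ 0) ∧
    IsWD2 Set.univ h M N := by
  subst hh hM hN
  refine ⟨fun z => part1 α β z, fun z => part2 α β z, fun z => part3 α β z,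
    fun z => part4 α β z hαβ, fun z => part5 α β z hαβ, ?_⟩
  constructor
  · intro z _
    exact (Complex.differentiable_exp.comp (differentiable_id.const_mul Complex.I)).differentiableAt
  · intro z _
    exact Complex.exp_ne_zero _
  · refine ContDiff.contDiffOn ?_
    exact (((contDiff_const.mul Complex.reCLM.contDiff).add
        (contDiff_const.mul Complex.imCLM.contDiff)).add
      ((Real.contDiff_sinh.comp Complex.reCLM.contDiff).mul
        (Real.contDiff_sin.comp Complex.reCLM.contDiff))).of_le le_top
  · refine ContDiff.contDiffOn ?_
    exact ((Real.contDiff_exp.comp Complex.imCLM.contDiff).mul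
      (Real.contDiff_cosh.comp Complex.reCLM.contDiff)).of_le le_top
  · intro z _
    exact part2 α β z
  · intro z _
    exact part5 α β z hαβ
end
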